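/- arXiv:1201.3861 — 4 statements merged into one kernel-verified Lean document; each statement's English description precedes it below -/
import Mathlib

section
/- For a finite simple graph H on n vertices and k ≥ 0, the chromatic coefficient e_k(H) (defined by ch_H(z) = Σ_k (-1)^k e_k(H) z^{n-k}) equals Σ over isomorphism classes of graphs G without isolated vertices with |V(G)| - c(G) = k of (-1)^{|E(G)|+k} inj(G,H)/|Aut(G)|, where inj(G,H) is the number of injective graph homomorphisms from G to H, c(G) the number of connected components, and Aut(G) the automorphism group of G. -/
set_option maxHeartbeats 1000000


open Polynomial Finset

/-- The number of proper colorings of `G` with `q` colors. -/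
noncomputable def properColorings {V : Type*} (G : SimpleGraph V) (q : ℕ) : ℕ :=
  Nat.card {f : V → Fin q // ∀ ⦃x y⦄, G.Adj x y → f x ≠ f y}

/-- The number of injective graph homomorphisms from `G` to `H`. -/
noncomputable def injCount {α β : Type*} (G : SimpleGraph α) (H : SimpleGraph β) : ℕ :=
  Nat.card {f : G →g H // Function.Injective f}

/-- A graph has no isolated vertices if every vertex has a neighbour. -/
def NoIsolated {α : Type*} (G : SimpleGraph α) : Prop := ∀ v, ∃ u, G.Adj v u

section AllAux
open SimpleGraph
section Aux
variable {V : Type*} {G : SimpleGraph V}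


lemma adjInv_walk {β : Type*} {f : V → β} (h : ∀ x y, G.Adj x y → f x = f y)
    {v w : V} (p : G.Walk v w) : f v = f w := by
  induction p with
  | nil => rfl
  | cons h' _ ih => exact (h _ _ h').trans ih

noncomputable def adjInvEquiv (G : SimpleGraph V) (β : Type*) :
    {f : V → β // ∀ x y, G.Adj x y → f x = f y} ≃ (G.ConnectedComponent → β) where
  toFun f := SimpleGraph.ConnectedComponent.lift f.1 (fun _ _ p _ => adjInv_walk f.2 p)
  invFun g := ⟨fun v => g (G.connectedComponentMk v), fun x y h => by
    simp only []
    rw [SimpleGraph.ConnectedComponent.sound h.reachable]⟩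
  left_inv f := rfl
  right_inv g := funext fun c => c.ind (fun v => rfl)

lemma card_adjInv [Finite V] (q : ℕ) :
    Nat.card {f : V → Fin q // ∀ x y, G.Adj x y → f x = f y}
      = q ^ Nat.card G.ConnectedComponent := by
  rw [Nat.card_congr (adjInvEquiv G (Fin q)), Nat.card_fun,
    Nat.card_eq_fintype_card (α := Fin q), Fintype.card_fin]

lemma card_cc_le [Finite V] : Nat.card G.ConnectedComponent ≤ Nat.card V :=
  Nat.card_le_card_of_surjective G.connectedComponentMk
    (fun c => c.ind fun v => ⟨v, rfl⟩)

end Aux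

section IE
variable {W : Type*} [Fintype W] (H : SimpleGraph W)


/-- condition: f constant on every edge of t -/
def Mono (t : Finset (Sym2 W)) {q : ℕ} (f : W → Fin q) : Prop :=
  ∀ e ∈ t, ∀ x ∈ e, ∀ y ∈ e, f x = f y

lemma mono_iff {t : Finset (Sym2 W)} (ht : ∀ e ∈ t, ¬ e.IsDiag) {q : ℕ} (f : W → Fin q) :
    Mono t f ↔ ∀ x y, (fromEdgeSet (↑t : Set (Sym2 W))).Adj x y → f x = f y := by
  constructor
  · intro h x y hxy
    rw [fromEdgeSet_adj] at hxy
    exact h _ hxy.1 x (Sym2.mem_mk_left x y) y (Sym2.mem_mk_right x y)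
  · intro h e he
    induction e with
    | _ a b =>
      have hab : a ≠ b := by
        intro hab; exact ht _ he (by simp [hab, Sym2.mk_isDiag_iff])
      have hfab : f a = f b := h a b (by rw [fromEdgeSet_adj]; exact ⟨by simpa using he, hab⟩)
      intro x hx y hy
      rw [Sym2.mem_iff] at hx hy
      rcases hx with rfl | rfl <;> rcases hy with rfl | rfl
      · rfl
      · exact hfab
      · exact hfab.symm
      · rfl

lemma count_mono [DecidableEq W] {t : Finset (Sym2 W)} (ht : ∀ e ∈ t, ¬ e.IsDiag) (q : ℕ)
    [DecidablePred (Mono t (q := q))] :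
    ((Finset.univ.filter (fun f : W → Fin q => Mono t f)).card : ℕ)
      = q ^ Nat.card (fromEdgeSet (↑t : Set (Sym2 W))).ConnectedComponent := by
  have h1 : (Finset.univ.filter (fun f : W → Fin q => Mono t f)).card
      = Nat.card {f : W → Fin q // Mono t f} := by
    rw [Nat.card_eq_fintype_card, Fintype.card_subtype]
  rw [h1, Nat.card_congr (Equiv.subtypeEquivRight (fun f => mono_iff ht f)), card_adjInv]

end IE

section IE2
variable {W : Type*} [Fintype W] [DecidableEq W] (H : SimpleGraph W)

noncomputable def EH (H : SimpleGraph W) : Finset (Sym2 W) := H.edgeSet.toFinite.toFinset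

lemma mem_EH {e : Sym2 W} : e ∈ EH H ↔ e ∈ H.edgeSet := Set.Finite.mem_toFinset _

noncomputable def cfull (t : Finset (Sym2 W)) : ℕ :=
  Nat.card (fromEdgeSet (↑t : Set (Sym2 W))).ConnectedComponent

open Classical in
lemma incl_excl (q : ℕ) :
    (properColorings H q : ℚ) =
      ∑ t ∈ (EH H).powerset, (-1 : ℚ) ^ t.card * (q : ℚ) ^ cfull t := by
  classical
  have hprop : (properColorings H q : ℚ)
      = ((Finset.univ.filter (fun f : W → Fin q => ∀ ⦃x y⦄, H.Adj x y → f x ≠ f y)).card : ℚ) := by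
    rw [properColorings, Nat.card_eq_fintype_card, Fintype.card_subtype]
  rw [hprop, Finset.natCast_card_filter]
  have key : ∀ f : W → Fin q,
      (if (∀ ⦃x y⦄, H.Adj x y → f x ≠ f y) then (1:ℚ) else 0)
        = ∏ e ∈ EH H, ((-(if (∀ x ∈ e, ∀ y ∈ e, f x = f y) then (1:ℚ) else 0)) + 1) := by
    intro f
    by_cases hf : ∀ ⦃x y⦄, H.Adj x y → f x ≠ f y
    · rw [if_pos hf]
      symm
      apply Finset.prod_eq_one
      intro e he
      rw [mem_EH] at he
      have : ¬ (∀ x ∈ e, ∀ y ∈ e, f x = f y) := by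
        induction e with
        | _ a b =>
          intro hmono
          exact hf (by rwa [← SimpleGraph.mem_edgeSet])
            (hmono a (Sym2.mem_mk_left a b) b (Sym2.mem_mk_right a b))
      rw [if_neg this]; ring
    · rw [if_neg hf]
      symm
      push_neg at hf
      obtain ⟨x, y, hadj, hfxy⟩ := hf
      apply Finset.prod_eq_zero (i := s(x, y)) (by rw [mem_EH]; exact hadj)
      have : (∀ a ∈ s(x,y), ∀ b ∈ s(x,y), f a = f b) := by
        intro a ha b hb
        rw [Sym2.mem_iff] at ha hb
        rcases ha with rfl | rfl <;> rcases hb with rfl | rfl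
        · rfl
        · exact hfxy
        · exact hfxy.symm
        · rfl
      rw [if_pos this]; ring
  calc (∑ f : W → Fin q, if (∀ ⦃x y⦄, H.Adj x y → f x ≠ f y) then (1:ℚ) else 0)
      = ∑ f : W → Fin q, ∏ e ∈ EH H,
          ((-(if (∀ x ∈ e, ∀ y ∈ e, f x = f y) then (1:ℚ) else 0)) + 1) :=
        Finset.sum_congr rfl (fun f _ => key f)
    _ = ∑ f : W → Fin q, ∑ t ∈ (EH H).powerset,
          (-1 : ℚ) ^ t.card * (if Mono t f then 1 else 0) := by
        apply Finset.sum_congr rfl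
        intro f _
        rw [Finset.prod_add]
        apply Finset.sum_congr rfl
        intro t _
        rw [Finset.prod_const_one, mul_one]
        have : ∏ e ∈ t, (-(if (∀ x ∈ e, ∀ y ∈ e, f x = f y) then (1:ℚ) else 0))
            = (-1:ℚ) ^ t.card * ∏ e ∈ t, (if (∀ x ∈ e, ∀ y ∈ e, f x = f y) then (1:ℚ) else 0) := by
          rw [← Finset.prod_const (-1 : ℚ), ← Finset.prod_mul_distrib]
          apply Finset.prod_congr rfl; intro e _; ring
        rw [this, Finset.prod_boole]
        congr 1
        convert rfl using 2
        exact Iff.rfl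
    _ = ∑ t ∈ (EH H).powerset, (-1 : ℚ) ^ t.card * (q : ℚ) ^ cfull t := by
        rw [Finset.sum_comm]
        apply Finset.sum_congr rfl
        intro t ht
        rw [← Finset.mul_sum, Finset.sum_boole]
        congr 1
        have hdiag : ∀ e ∈ t, ¬ e.IsDiag := by
          intro e he
          exact H.not_isDiag_of_mem_edgeSet
            ((mem_EH H).mp (Finset.mem_powerset.mp ht he))
        exact_mod_cast count_mono hdiag q

end IE2

section Supp
variable {W : Type*} [Fintype W]

/-- `G` represents the edge subset `t` via the injective vertex map `f`. -/
def Represents {m : ℕ} (G : SimpleGraph (Fin m)) (f : Fin m → W) (t : Finset (Sym2 W)) : Prop :=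
  Function.Injective f ∧ (∀ a b, G.Adj a b ↔ s(f a, f b) ∈ t) ∧
    ∀ e ∈ t, ∃ a b, G.Adj a b ∧ e = s(f a, f b)

lemma Represents.exists_iso {m m' : ℕ} {G : SimpleGraph (Fin m)} {G' : SimpleGraph (Fin m')}
    {f : Fin m → W} {g : Fin m' → W} {t : Finset (Sym2 W)}
    (hf : Represents G f t) (hg : Represents G' g t)
    (hG : NoIsolated G) (hG' : NoIsolated G') :
    ∃ σ : G ≃g G', ∀ v, g (σ v) = f v := by
  obtain ⟨hfinj, hfadj, hfsurj⟩ := hf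
  obtain ⟨hginj, hgadj, hgsurj⟩ := hg
  have hrange : ∀ v : Fin m, ∃ a : Fin m', g a = f v := by
    intro v
    obtain ⟨u, hu⟩ := hG v
    obtain ⟨a, b, _, he⟩ := hgsurj _ ((hfadj v u).mp hu)
    rw [Sym2.eq_iff] at he
    rcases he with ⟨h1, _⟩ | ⟨h1, _⟩
    · exact ⟨a, h1.symm⟩
    · exact ⟨b, h1.symm⟩
  have hrange' : ∀ w : Fin m', ∃ a : Fin m, f a = g w := by
    intro w
    obtain ⟨u, hu⟩ := hG' w
    obtain ⟨a, b, _, he⟩ := hfsurj _ ((hgadj w u).mp hu)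
    rw [Sym2.eq_iff] at he
    rcases he with ⟨h1, _⟩ | ⟨h1, _⟩
    · exact ⟨a, h1.symm⟩
    · exact ⟨b, h1.symm⟩
  choose σ hσ using hrange
  choose τ hτ using hrange'
  have hτσ : ∀ v, τ (σ v) = v := fun v => hfinj (by rw [hτ, hσ])
  have hστ : ∀ w, σ (τ w) = w := fun w => hginj (by rw [hσ, hτ])
  refine ⟨⟨⟨σ, τ, hτσ, hστ⟩, ?_⟩, hσ⟩
  intro a b
  show G'.Adj (σ a) (σ b) ↔ G.Adj a b
  rw [hgadj, hσ, hσ, ← hfadj]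

lemma Represents.card_edges {m : ℕ} {G : SimpleGraph (Fin m)} {f : Fin m → W}
    {t : Finset (Sym2 W)} (h : Represents G f t) :
    t.card = Nat.card G.edgeSet := by
  obtain ⟨hinj, hadj, hsurj⟩ := h
  have hmem : ∀ e : Sym2 (Fin m), e ∈ G.edgeSet → Sym2.map f e ∈ t := by
    intro e he
    induction e with
    | _ a b => rw [Sym2.map_pair_eq]; exact (hadj a b).mp he
  have hbij : Function.Bijective
      (fun e : G.edgeSet => (⟨Sym2.map f e.1, hmem _ e.2⟩ : {e : Sym2 W // e ∈ t})) := by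
    constructor
    · intro e e' hee
      exact Subtype.ext (Sym2.map.injective hinj (congrArg Subtype.val hee))
    · rintro ⟨e, he⟩
      obtain ⟨a, b, hab, rfl⟩ := hsurj e he
      exact ⟨⟨s(a,b), hab⟩, by simp [Sym2.map_pair_eq]⟩
  rw [← Nat.card_eq_finsetCard, ← Nat.card_eq_of_bijective _ hbij]

/-- Number of non-isolated vertices of the graph spanned by `t`. -/
noncomputable def suppCard (t : Finset (Sym2 W)) : ℕ :=
  Nat.card {v : W // ∃ u, (fromEdgeSet (↑t : Set (Sym2 W))).Adj v u}

noncomputable def suppEquiv (t : Finset (Sym2 W)) :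
    Fin (suppCard t) ≃ {v : W // ∃ u, (fromEdgeSet (↑t : Set (Sym2 W))).Adj v u} :=
  (Finite.equivFin _).symm

/-- The support graph of `t`, on vertex set `Fin (suppCard t)`. -/
noncomputable def suppGraph (t : Finset (Sym2 W)) : SimpleGraph (Fin (suppCard t)) :=
  SimpleGraph.comap (fun i => ((suppEquiv t i : W))) (fromEdgeSet (↑t : Set (Sym2 W)))

lemma suppGraph_represents {t : Finset (Sym2 W)} (ht : ∀ e ∈ t, ¬ e.IsDiag) :
    Represents (suppGraph t) (fun i => ((suppEquiv t i : W))) t := by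
  refine ⟨fun a b hab => (suppEquiv t).injective (Subtype.ext hab), fun a b => ?_, ?_⟩
  · rw [suppGraph, comap_adj, fromEdgeSet_adj]
    constructor
    · exact fun h => h.1
    · intro h
      refine ⟨h, fun hEq => ht _ h ?_⟩
      simpa using Sym2.mk_isDiag_iff.mpr hEq
  · intro e he
    induction e with
    | _ x y =>
      have hxy : x ≠ y := fun hEq => ht _ he (by rw [hEq]; exact Sym2.mk_isDiag_iff.mpr rfl)
      have hadj : (fromEdgeSet (↑t : Set (Sym2 W))).Adj x y := by
        rw [fromEdgeSet_adj]; exact ⟨by simpa using he, hxy⟩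
      refine ⟨(suppEquiv t).symm ⟨x, ⟨y, hadj⟩⟩, (suppEquiv t).symm ⟨y, ⟨x, hadj.symm⟩⟩, ?_, ?_⟩
      · rw [suppGraph, comap_adj]
        simpa using hadj
      · simp
end Supp

section Count
variable {W : Type*} [Fintype W]

lemma suppGraph_noIsolated {t : Finset (Sym2 W)} : NoIsolated (suppGraph t) := by
  intro v
  obtain ⟨u, hu⟩ := (suppEquiv t v).2
  refine ⟨(suppEquiv t).symm ⟨u, ⟨_, hu.symm⟩⟩, ?_⟩
  rw [suppGraph, comap_adj]
  simpa using hu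

private lemma walk_reach_supp {t : Finset (Sym2 W)} {v w : W}
    (p : (fromEdgeSet (↑t : Set (Sym2 W))).Walk v w) :
    ∀ (hv : ∃ u, (fromEdgeSet (↑t : Set (Sym2 W))).Adj v u)
      (hw : ∃ u, (fromEdgeSet (↑t : Set (Sym2 W))).Adj w u),
    (suppGraph t).Reachable ((suppEquiv t).symm ⟨v, hv⟩) ((suppEquiv t).symm ⟨w, hw⟩) := by
  induction p with
  | nil => intro hv hw; exact Reachable.refl _
  | @cons a x w h p ih =>
    intro hv hw
    have hx : ∃ u, (fromEdgeSet (↑t : Set (Sym2 W))).Adj x u := ⟨a, h.symm⟩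
    have h1 : (suppGraph t).Adj ((suppEquiv t).symm ⟨a, hv⟩) ((suppEquiv t).symm ⟨x, hx⟩) := by
      rw [suppGraph, comap_adj]
      simpa using h
    exact (h1.reachable).trans (ih hx hw)

private lemma walk_eq_of_not_supp {t : Finset (Sym2 W)} {v w : W}
    (hv : ¬ ∃ u, (fromEdgeSet (↑t : Set (Sym2 W))).Adj v u)
    (h : (fromEdgeSet (↑t : Set (Sym2 W))).Reachable v w) : v = w := by
  obtain ⟨p⟩ := h
  cases p with
  | nil => rfl
  | cons h' _ => exact absurd ⟨_, h'⟩ hv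

lemma cfull_eq_suppGraph (t : Finset (Sym2 W)) :
    Nat.card (fromEdgeSet (↑t : Set (Sym2 W))).ConnectedComponent
      = Nat.card (suppGraph t).ConnectedComponent
        + (Fintype.card W - suppCard t) := by
  classical
  set F := fromEdgeSet (↑t : Set (Sym2 W)) with hF
  set G := suppGraph t with hG
  let f : Fin (suppCard t) → W := fun i => ((suppEquiv t i : W))
  have hfadj : ∀ {a b}, G.Adj a b → F.Adj (f a) (f b) := fun h => by
    rw [hG, suppGraph, comap_adj] at h; exact h
  let hom : G →g F := ⟨f, hfadj⟩
  let φ : G.ConnectedComponent ⊕ {v : W // ¬ ∃ u, F.Adj v u} → F.ConnectedComponent :=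
    fun x => Sum.elim (fun c => c.map hom) (fun v => F.connectedComponentMk v.1) x
  have hsupp : ∀ i : Fin (suppCard t), ∃ u, F.Adj (f i) u := fun i => (suppEquiv t i).2
  have hφbij : Function.Bijective φ := by
    constructor
    · rintro (c | v) (c' | v') h
      · refine congrArg Sum.inl ?_
        revert h
        refine SimpleGraph.ConnectedComponent.ind₂ (fun i j h => ?_) c c'
        simp only [φ, Sum.elim_inl, SimpleGraph.ConnectedComponent.map_mk] at h
        have hr : F.Reachable (f i) (f j) := SimpleGraph.ConnectedComponent.exact h
        obtain ⟨p⟩ := hr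
        have := walk_reach_supp p (hsupp i) (hsupp j)
        have hii : (suppEquiv t).symm ⟨f i, hsupp i⟩ = i := by
          rw [show (⟨f i, hsupp i⟩ : {v : W // ∃ u, F.Adj v u}) = suppEquiv t i from rfl]
          exact (suppEquiv t).symm_apply_apply i
        have hjj : (suppEquiv t).symm ⟨f j, hsupp j⟩ = j := by
          rw [show (⟨f j, hsupp j⟩ : {v : W // ∃ u, F.Adj v u}) = suppEquiv t j from rfl]
          exact (suppEquiv t).symm_apply_apply j
        rw [hii, hjj] at this
        exact SimpleGraph.ConnectedComponent.sound this
      · exfalso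
        revert h
        refine SimpleGraph.ConnectedComponent.ind (fun i h => ?_) c
        simp only [φ, Sum.elim_inl, Sum.elim_inr, SimpleGraph.ConnectedComponent.map_mk] at h
        have hr : F.Reachable v'.1 (f i) := (SimpleGraph.ConnectedComponent.exact h).symm
        exact v'.2 (walk_eq_of_not_supp v'.2 hr ▸ hsupp i)
      · exfalso
        revert h
        refine SimpleGraph.ConnectedComponent.ind (fun i h => ?_) c'
        simp only [φ, Sum.elim_inl, Sum.elim_inr, SimpleGraph.ConnectedComponent.map_mk] at h
        have hr : F.Reachable v.1 (f i) := SimpleGraph.ConnectedComponent.exact h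
        exact v.2 (walk_eq_of_not_supp v.2 hr ▸ hsupp i)
      · refine congrArg Sum.inr (Subtype.ext ?_)
        simp only [φ, Sum.elim_inr] at h
        exact walk_eq_of_not_supp v.2 (SimpleGraph.ConnectedComponent.exact h)
    · intro c
      refine SimpleGraph.ConnectedComponent.ind (fun v => ?_) c
      by_cases hv : ∃ u, F.Adj v u
      · refine ⟨Sum.inl (G.connectedComponentMk ((suppEquiv t).symm ⟨v, hv⟩)), ?_⟩
        simp only [φ, Sum.elim_inl, SimpleGraph.ConnectedComponent.map_mk]
        congr 1
        show f ((suppEquiv t).symm ⟨v, hv⟩) = v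
        simp [f]
      · exact ⟨Sum.inr ⟨v, hv⟩, rfl⟩
  have := Nat.card_eq_of_bijective φ hφbij
  rw [← this, Nat.card_sum]
  congr 1
  rw [Nat.card_eq_fintype_card, Fintype.card_subtype_compl]
  congr 1
  rw [suppCard, Nat.card_eq_fintype_card]

lemma suppCard_le (t : Finset (Sym2 W)) : suppCard t ≤ Fintype.card W := by
  rw [suppCard]
  have : Nat.card {v : W // ∃ u, (fromEdgeSet (↑t : Set (Sym2 W))).Adj v u} ≤ Nat.card W :=
    Nat.card_le_card_of_injective Subtype.val Subtype.val_injective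
  simpa [Nat.card_eq_fintype_card] using this

lemma represents_count {m : ℕ} {G : SimpleGraph (Fin m)} {f : Fin m → W} {t : Finset (Sym2 W)}
    (h : Represents G f t) (hG : NoIsolated G) (ht : ∀ e ∈ t, ¬ e.IsDiag) :
    Nat.card (fromEdgeSet (↑t : Set (Sym2 W))).ConnectedComponent
      + (m - Nat.card G.ConnectedComponent) = Fintype.card W := by
  obtain ⟨σ, -⟩ := h.exists_iso (suppGraph_represents ht) hG suppGraph_noIsolated
  have hm : m = suppCard t := by
    simpa using Fintype.card_congr σ.toEquiv
  have hc : Nat.card G.ConnectedComponent = Nat.card (suppGraph t).ConnectedComponent :=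
    Nat.card_congr (σ.connectedComponentEquiv)
  have h1 : Nat.card (suppGraph t).ConnectedComponent ≤ suppCard t := by
    have := card_cc_le (G := suppGraph t)
    simpa using this
  have h2 : suppCard t ≤ Fintype.card W := by
    rw [suppCard]
    have : Nat.card {v : W // ∃ u, (fromEdgeSet (↑t : Set (Sym2 W))).Adj v u} ≤ Nat.card W :=
      Nat.card_le_card_of_injective Subtype.val Subtype.val_injective
    simpa [Nat.card_eq_fintype_card] using this
  rw [cfull_eq_suppGraph, hc]
  omega

end Count

section Orbit
variable {W : Type*} [Fintype W] {H : SimpleGraph W}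

/-- The edge set of the image of a graph hom, as a finset. -/
noncomputable def edgeImage {m : ℕ} {G : SimpleGraph (Fin m)} (f : G →g H) : Finset (Sym2 W) :=
  (Set.toFinite (Sym2.map ⇑f '' G.edgeSet)).toFinset

lemma mem_edgeImage {m : ℕ} {G : SimpleGraph (Fin m)} {f : G →g H} {e : Sym2 W} :
    e ∈ edgeImage f ↔ ∃ e' ∈ G.edgeSet, Sym2.map ⇑f e' = e := by
  rw [edgeImage, Set.Finite.mem_toFinset]
  simp [Set.mem_image]

lemma edgeImage_represents {m : ℕ} {G : SimpleGraph (Fin m)} (f : G →g H)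
    (hf : Function.Injective ⇑f) : Represents G ⇑f (edgeImage f) := by
  refine ⟨hf, fun a b => ?_, fun e he => ?_⟩
  · constructor
    · intro h
      rw [mem_edgeImage]
      exact ⟨s(a, b), h, Sym2.map_pair_eq ⇑f a b⟩
    · intro h
      rw [mem_edgeImage] at h
      obtain ⟨e', he', hmap⟩ := h
      induction e' with
      | _ x y =>
        rw [Sym2.map_pair_eq, Sym2.eq_iff] at hmap
        rcases hmap with ⟨h1, h2⟩ | ⟨h1, h2⟩
        · rwa [hf h1, hf h2] at he'
        · exact (by rwa [hf h1, hf h2] at he' : G.Adj b a).symm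
  · rw [mem_edgeImage] at he
    obtain ⟨e', he', hmap⟩ := he
    induction e' with
    | _ x y => exact ⟨x, y, he', by rw [← hmap, Sym2.map_pair_eq]⟩

lemma represents_edgeImage_eq {m : ℕ} {G : SimpleGraph (Fin m)} {f : G →g H}
    {t : Finset (Sym2 W)} (h : Represents G ⇑f t) : edgeImage f = t := by
  obtain ⟨hinj, hadj, hsurj⟩ := h
  ext e
  rw [mem_edgeImage]
  constructor
  · rintro ⟨e', he', rfl⟩
    induction e' with
    | _ a b => rw [Sym2.map_pair_eq]; exact (hadj a b).mp he'
  · intro he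
    obtain ⟨a, b, hab, rfl⟩ := hsurj e he
    exact ⟨s(a, b), hab, Sym2.map_pair_eq ⇑f a b⟩

noncomputable instance {m : ℕ} {G : SimpleGraph (Fin m)} : Fintype (G →g H) :=
  @Fintype.ofFinite _ (Finite.of_injective (fun f => ⇑f) DFunLike.coe_injective)

/-- The fibre of the edge-image map over `t` is a torsor under `Aut G`. -/
noncomputable def autEquivFiber {m : ℕ} {G : SimpleGraph (Fin m)} (hG : NoIsolated G)
    (t : Finset (Sym2 W)) (f0 : G →g H) (hf0 : Function.Injective ⇑f0)
    (hf0t : Represents G ⇑f0 t) :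
    (G ≃g G) ≃ {f : G →g H // Function.Injective ⇑f ∧ edgeImage f = t} := by
  have hrep : ∀ σ : G ≃g G, Represents G ⇑(f0.comp σ.toHom) t := by
    intro σ
    refine ⟨hf0.comp σ.injective, fun a b => ?_, fun e he => ?_⟩
    · show G.Adj a b ↔ s(f0 (σ a), f0 (σ b)) ∈ t
      rw [← hf0t.2.1 (σ a) (σ b), σ.map_adj_iff]
    · obtain ⟨a, b, hab, rfl⟩ := hf0t.2.2 e he
      refine ⟨σ.symm a, σ.symm b, ?_, ?_⟩
      · rw [← σ.map_adj_iff]; simpa using hab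
      · show s(f0 a, f0 b) = s(f0 (σ (σ.symm a)), f0 (σ (σ.symm b)))
        simp
  refine Equiv.ofBijective
    (fun σ => ⟨f0.comp σ.toHom, (hrep σ).1, represents_edgeImage_eq (hrep σ)⟩) ⟨?_, ?_⟩
  · intro σ σ' h
    have hv : f0.comp σ.toHom = f0.comp σ'.toHom := congrArg Subtype.val h
    have h2 : ∀ v, f0 (σ v) = f0 (σ' v) := fun v => DFunLike.congr_fun hv v
    have h3 : ∀ v, σ v = σ' v := fun v => hf0 (h2 v)
    exact DFunLike.coe_injective (funext h3)
  · rintro ⟨f, hfinj, hft⟩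
    have hfrep : Represents G ⇑f t := hft ▸ edgeImage_represents f hfinj
    obtain ⟨σ, hσ⟩ := hfrep.exists_iso hf0t hG hG
    refine ⟨σ, Subtype.ext ?_⟩
    apply DFunLike.coe_injective
    funext v
    exact hσ v

lemma injCount_eq_card_mul {m : ℕ} (G : SimpleGraph (Fin m)) (hG : NoIsolated G)
    (S : Finset (Finset (Sym2 W)))
    (hS : ∀ t, t ∈ S ↔ ∃ f : G →g H, Function.Injective ⇑f ∧ edgeImage f = t) :
    Nat.card {f : G →g H // Function.Injective ⇑f} = S.card * Nat.card (G ≃g G) := by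
  classical
  rw [Nat.card_eq_fintype_card]
  have key : Fintype.card {f : G →g H // Function.Injective ⇑f}
      = (Finset.univ.filter (fun f : G →g H => Function.Injective ⇑f)).card := by
    rw [Fintype.card_subtype]
  rw [key, Finset.card_eq_sum_card_fiberwise
    (f := fun f => edgeImage f) (t := S)
    (fun f hf => (hS _).mpr ⟨f, (Finset.mem_filter.mp hf).2, rfl⟩)]
  rw [Finset.sum_congr rfl (g := fun _ => Nat.card (G ≃g G)) ?_, Finset.sum_const, smul_eq_mul]
  intro t ht
  obtain ⟨f0, hf0, hf0t⟩ := (hS t).mp ht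
  have hrep0 : Represents G ⇑f0 t := hf0t ▸ edgeImage_represents f0 hf0
  rw [Finset.filter_filter, ← Fintype.card_subtype, ← Nat.card_eq_fintype_card,
    Nat.card_congr (autEquivFiber hG t f0 hf0 hrep0).symm]

end Orbit

end AllAux

/-- `e_k(H) = Σ_{[G] ∈ 𝒢(k)} (-1)^{|E(G)|+k} inj(G,H) / |Aut(G)|`, where the sum runs over
isomorphism classes of graphs without isolated vertices satisfying `|V(G)| - c(G) = k`,
given by a finite system of representatives `rep : ι → Σ m, SimpleGraph (Fin m)`. -/
theorem chromatic_coefficient_eq_inj_sum {W : Type*} [Fintype W] (H : SimpleGraph W)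
    (P : Polynomial ℚ)
    (hP : ∀ q : ℕ, P.eval (q : ℚ) = properColorings H q)
    (e : ℕ → ℚ)
    (he : ∀ k, e k = if k ≤ Fintype.card W then
      (-1 : ℚ) ^ k * P.coeff (Fintype.card W - k) else 0)
    (k : ℕ) (ι : Type) [Fintype ι] (rep : ι → Σ m : ℕ, SimpleGraph (Fin m))
    -- every representative lies in `𝒢(k)`:
    (hrep : ∀ i, NoIsolated (rep i).2 ∧
      (rep i).1 - Nat.card (rep i).2.ConnectedComponent = k)
    -- every finite graph in `𝒢(k)` is isomorphic to exactly one representative: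
    (hrep' : ∀ (m : ℕ) (G : SimpleGraph (Fin m)), NoIsolated G →
      m - Nat.card G.ConnectedComponent = k → ∃! i : ι, Nonempty (G ≃g (rep i).2)) :
    e k = ∑ i : ι,
      (-1 : ℚ) ^ (Nat.card (rep i).2.edgeSet + k) * (injCount (rep i).2 H : ℚ) /
        (Nat.card ((rep i).2 ≃g (rep i).2) : ℚ) := by

  classical
  have hAutFin : ∀ i : ι, Finite ((rep i).2 ≃g (rep i).2) := fun i =>
    Finite.of_injective (fun σ => ⇑σ) DFunLike.coe_injective
  have hAutPos : ∀ i : ι, 0 < Nat.card ((rep i).2 ≃g (rep i).2) := by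
    intro i
    have := hAutFin i
    have : Nonempty ((rep i).2 ≃g (rep i).2) := ⟨RelIso.refl _⟩
    exact Nat.card_pos
  by_cases hk : k ≤ Fintype.card W
  case neg =>
    rw [he k, if_neg hk]
    symm
    apply Finset.sum_eq_zero
    intro i _
    have h0 : injCount (rep i).2 H = 0 := by
      rw [injCount, Nat.card_eq_zero]
      left
      constructor
      rintro ⟨f, hf⟩
      have hmn : (rep i).1 ≤ Fintype.card W := by
        simpa using Fintype.card_le_of_injective ⇑f hf
      have h2 := (hrep i).2
      have h3 : (rep i).1 - Nat.card (rep i).2.ConnectedComponent ≤ (rep i).1 := Nat.sub_le _ _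
      omega
    rw [h0]
    simp
  case pos =>
    set n := Fintype.card W with hn
    clear_value n
    -- identify P with the subgraph-expansion polynomial Q
    set Q : Polynomial ℚ :=
      ∑ t ∈ (EH H).powerset, Polynomial.C ((-1:ℚ) ^ t.card) * Polynomial.X ^ cfull t with hQ
    have hPQ : P = Q := by
      apply Polynomial.eq_of_infinite_eval_eq
      apply Set.Infinite.mono (s := Set.range (Nat.cast : ℕ → ℚ))
      · rintro x ⟨q, rfl⟩
        show P.eval _ = Q.eval _
        rw [hP q, incl_excl H q, hQ, Polynomial.eval_finset_sum]
        apply Finset.sum_congr rfl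
        intro t _
        rw [Polynomial.eval_mul, Polynomial.eval_C, Polynomial.eval_pow, Polynomial.eval_X]
      · exact Set.infinite_range_of_injective Nat.cast_injective
    have hcoeff : P.coeff (n - k)
        = ∑ t ∈ (EH H).powerset.filter (fun t => cfull t = n - k), (-1:ℚ) ^ t.card := by
      rw [hPQ, hQ, Polynomial.finset_sum_coeff, Finset.sum_filter]
      apply Finset.sum_congr rfl
      intro t _
      rw [Polynomial.coeff_C_mul, Polynomial.coeff_X_pow, mul_ite, mul_one, mul_zero]
      simp only [eq_comm]
    set Tk := (EH H).powerset.filter (fun t => cfull t = n - k) with hTk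
    have hTkdiag : ∀ t ∈ Tk, ∀ e ∈ t, ¬ e.IsDiag := by
      intro t ht e he
      exact H.not_isDiag_of_mem_edgeSet
        ((mem_EH H).mp (Finset.mem_powerset.mp (Finset.mem_filter.mp ht).1 he))
    -- characterization of the fibres
    have h_char : ∀ (i : ι) (t : Finset (Sym2 W)),
        (t ∈ Tk ∧ Nonempty (suppGraph t ≃g (rep i).2)) ↔
        ∃ f : (rep i).2 →g H, Function.Injective ⇑f ∧ edgeImage f = t := by
      intro i t
      constructor
      · rintro ⟨ht, ⟨σ⟩⟩
        have hdiag := hTkdiag t ht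
        have hsg := suppGraph_represents hdiag
        have hsub : t ⊆ EH H := Finset.mem_powerset.mp (Finset.mem_filter.mp ht).1
        set g : Fin (suppCard t) → W := fun j => ((suppEquiv t j : W)) with hg
        set f : Fin (rep i).1 → W := fun a => g (σ.symm a) with hf
        have hfrep : Represents (rep i).2 f t := by
          refine ⟨hsg.1.comp σ.symm.injective, fun a b => ?_, fun e he => ?_⟩
          · rw [show s(f a, f b) = s(g (σ.symm a), g (σ.symm b)) from rfl,
              ← hsg.2.1 (σ.symm a) (σ.symm b)]
            exact (σ.symm.map_adj_iff).symm
          · obtain ⟨a, b, hab, rfl⟩ := hsg.2.2 e he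
            refine ⟨σ a, σ b, σ.symm.map_adj_iff.mp ?_, ?_⟩
            · simpa using hab
            · show s(g a, g b) = s(g (σ.symm (σ a)), g (σ.symm (σ b)))
              simp
        refine ⟨⟨f, fun {a b} hab => ?_⟩, hfrep.1, represents_edgeImage_eq hfrep⟩
        exact (SimpleGraph.mem_edgeSet H).mp
          ((mem_EH H).mp (hsub ((hfrep.2.1 a b).mp hab)))
      · rintro ⟨f, hfinj, rfl⟩
        have hfrep := edgeImage_represents f hfinj
        have hsub : edgeImage f ⊆ EH H := by
          intro e he
          rw [mem_edgeImage] at he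
          obtain ⟨e', he', rfl⟩ := he
          induction e' with
          | _ x y =>
            rw [Sym2.map_pair_eq, mem_EH]
            exact (SimpleGraph.mem_edgeSet H).mpr (f.map_adj he')
        have hdiag : ∀ e ∈ edgeImage f, ¬ e.IsDiag := fun e he =>
          H.not_isDiag_of_mem_edgeSet ((mem_EH H).mp (hsub he))
        have hcount := represents_count hfrep (hrep i).1 hdiag
        have hk2 := (hrep i).2
        refine ⟨Finset.mem_filter.mpr ⟨Finset.mem_powerset.mpr hsub, by rw [cfull] at *; omega⟩, ?_⟩
        obtain ⟨σ, -⟩ := (suppGraph_represents hdiag).exists_iso hfrep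
          suppGraph_noIsolated (hrep i).1
        exact ⟨σ⟩
    have h_unique : ∀ t ∈ Tk, ∃! i : ι, Nonempty (suppGraph t ≃g (rep i).2) := by
      intro t ht
      have hdiag := hTkdiag t ht
      have hcf : cfull t = n - k := (Finset.mem_filter.mp ht).2
      have h1 := cfull_eq_suppGraph t
      have h2 : Nat.card (suppGraph t).ConnectedComponent ≤ suppCard t := by
        simpa using card_cc_le (G := suppGraph t)
      have h3 := suppCard_le t
      have h4 : suppCard t - Nat.card (suppGraph t).ConnectedComponent = k := by
        rw [cfull] at hcf
        omega
      exact hrep' (suppCard t) (suppGraph t) suppGraph_noIsolated h4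
    -- counting
    have hSi : ∀ i : ι,
        Nat.card {f : (rep i).2 →g H // Function.Injective ⇑f}
          = (Tk.filter (fun t => Nonempty (suppGraph t ≃g (rep i).2))).card
            * Nat.card ((rep i).2 ≃g (rep i).2) := by
      intro i
      apply injCount_eq_card_mul (rep i).2 (hrep i).1
      intro t
      rw [Finset.mem_filter]
      exact h_char i t
    have hcardt : ∀ i : ι, ∀ t ∈ Tk.filter (fun t => Nonempty (suppGraph t ≃g (rep i).2)),
        t.card = Nat.card (rep i).2.edgeSet := by
      intro i t ht
      rw [Finset.mem_filter] at ht
      obtain ⟨f, hfinj, hfim⟩ := (h_char i t).mp ht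
      have hfrep : Represents (rep i).2 ⇑f t := hfim ▸ edgeImage_represents f hfinj
      exact hfrep.card_edges
    have hsplit : ∑ t ∈ Tk, (-1:ℚ) ^ t.card
        = ∑ i : ι, ((Tk.filter (fun t => Nonempty (suppGraph t ≃g (rep i).2))).card : ℚ)
            * (-1:ℚ) ^ (Nat.card (rep i).2.edgeSet) := by
      have h1 : ∀ t ∈ Tk, (-1:ℚ) ^ t.card
          = ∑ i : ι, (if Nonempty (suppGraph t ≃g (rep i).2) then (-1:ℚ) ^ t.card else 0) := by
        intro t ht
        obtain ⟨i0, hi0, huniq⟩ := h_unique t ht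
        have h2 : ∀ i : ι, (if Nonempty (suppGraph t ≃g (rep i).2) then (-1:ℚ) ^ t.card else 0)
            = (if i = i0 then (-1:ℚ) ^ t.card else 0) := by
          intro i
          by_cases h : Nonempty (suppGraph t ≃g (rep i).2)
          · rw [if_pos h, if_pos (huniq i h)]
          · rw [if_neg h, if_neg (fun he => h (by rw [he]; exact hi0))]
        rw [Finset.sum_congr rfl (fun i _ => h2 i),
          Finset.sum_ite_eq' Finset.univ i0 (fun _ => (-1:ℚ) ^ t.card),
          if_pos (Finset.mem_univ i0)]
      rw [Finset.sum_congr rfl h1, Finset.sum_comm]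
      apply Finset.sum_congr rfl
      intro i _
      rw [← Finset.sum_filter,
        Finset.sum_congr rfl (fun t ht => by rw [hcardt i t ht]),
        Finset.sum_const, nsmul_eq_mul]
    rw [he k, if_pos hk, hcoeff, hsplit, Finset.mul_sum]
    apply Finset.sum_congr rfl
    intro i _
    rw [show injCount (rep i).2 H = Nat.card {f : (rep i).2 →g H // Function.Injective ⇑f} from rfl,
      hSi i, pow_add]
    have hA : ((Nat.card ((rep i).2 ≃g (rep i).2)) : ℚ) ≠ 0 := by
      exact_mod_cast (hAutPos i).ne'
    push_cast
    field_simp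
end

section
/- Let G, H be finite simple graphs. Then inj(G,H) = Σ over partitions P of V(G) into independent sets (i.e., no edge of G joins two vertices in the same class) of (-1)^{|V(G)|+|V(G/P)|} · (Π_{p∈P} (|p|-1)!) · hom(G/P, H), where G/P is the simple graph obtained by contracting each class of P and deleting multiple edges and loops. -/
open Finset
open scoped Classical

/-- The number of graph homomorphisms from `G` to `H`. -/
noncomputable def homCount {α β : Type*} (G : SimpleGraph α) (H : SimpleGraph β) : ℕ :=
  Nat.card (G →g H)

/-- The quotient simple graph `G/P` of `G` by a partition `P` of its vertex set:
its vertices are the classes of `P`, two classes being adjacent iff they are distinct and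
some edge of `G` joins them (multiple edges and loops are erased). -/
def quotGraph {V : Type*} [Fintype V] [DecidableEq V] (G : SimpleGraph V)
    (P : Finpartition (Finset.univ : Finset V)) :
    SimpleGraph {p // p ∈ P.parts} where
  Adj p q := p ≠ q ∧ ∃ x ∈ p.1, ∃ y ∈ q.1, G.Adj x y
  symm := by
    constructor
    rintro p q ⟨h, x, hx, y, hy, hxy⟩
    exact ⟨h.symm, y, hy, x, hx, hxy.symm⟩
  loopless := by constructor; rintro p ⟨h, -⟩; exact h rfl

variable {V : Type} [Fintype V] [DecidableEq V]

noncomputable instance fintypeFinpartition (s : Finset V) : Fintype (Finpartition s) :=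
  Fintype.ofInjective Finpartition.parts fun _ _ h => Finpartition.ext h


noncomputable instance {V : Type} [Fintype V] [DecidableEq V] :
    Fintype (Finpartition (Finset.univ : Finset V)) :=
  Fintype.ofInjective Finpartition.parts fun _ _ h => Finpartition.ext h

lemma avoid_parts_of_mem {s : Finset V} (P : Finpartition s) {p : Finset V}
    (hp : p ∈ P.parts) : (P.avoid p).parts = P.parts.erase p := by
  ext c
  rw [Finpartition.mem_avoid, mem_erase]
  constructor
  · rintro ⟨d, hd, hdp, rfl⟩
    have hdne : d ≠ p := by rintro rfl; exact hdp le_rfl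
    have hdisj : Disjoint d p := P.disjoint hd hp hdne
    rw [hdisj.sdiff_eq_left]
    exact ⟨hdne, hd⟩
  · rintro ⟨hcp, hc⟩
    have hdisj : Disjoint c p := P.disjoint hc hp hcp
    refine ⟨c, hc, fun hle => ?_, hdisj.sdiff_eq_left⟩
    exact P.bot_notMem ((hdisj.eq_bot_of_le hle) ▸ hc)

section Key

variable {W : Type*}

/-- The summand. -/
noncomputable def pterm (f : V → W) {s : Finset V} (P : Finpartition s) : ℤ :=
  if (∀ p ∈ P.parts, ∀ x ∈ p, ∀ y ∈ p, f x = f y) then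
    (-1 : ℤ) ^ (s.card + P.parts.card) *
      ((∏ p ∈ P.parts, Nat.factorial (p.card - 1) : ℕ) : ℤ)
  else 0

/-- single-part coefficient -/
noncomputable def cpt (f : V → W) (p : Finset V) : ℤ :=
  if (∀ x ∈ p, ∀ y ∈ p, f x = f y) then
    (-1 : ℤ) ^ (p.card + 1) * ((p.card - 1).factorial : ℤ)
  else 0

lemma pterm_empty (f : V → W) (P : Finpartition (∅ : Finset V)) : pterm f P = 1 := by
  have h0 : P.parts = ∅ := by rw [Finpartition.parts_eq_empty_iff]; rfl
  simp [pterm, h0]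

lemma keyC_empty (f : V → W) [inst : Fintype (Finpartition (∅ : Finset V))] :
    (∑ P : Finpartition (∅ : Finset V), pterm f P) = 1 := by
  haveI : Subsingleton (Finpartition (∅ : Finset V)) :=
    ⟨fun P Q => Finpartition.ext (by
      have h1 : P.parts = ∅ := by rw [Finpartition.parts_eq_empty_iff]; rfl
      have h2 : Q.parts = ∅ := by rw [Finpartition.parts_eq_empty_iff]; rfl
      rw [h1, h2])⟩
  have hne : Nonempty (Finpartition (∅ : Finset V)) := ⟨Finpartition.empty (Finset V)⟩
  obtain ⟨P0⟩ := hne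
  rw [show (Finset.univ : Finset (Finpartition (∅ : Finset V))) = {P0} from
    by ext Q; simp [Subsingleton.elim Q P0]]
  simp [pterm_empty]

end Key

section Key2

variable {W : Type*}

lemma sigma_finpart_ext {s : Finset V} {p q : Finset V} {Q : Finpartition (s \ p)}
    {R : Finpartition (s \ q)} (h : p = q) (h2 : Q.parts = R.parts) :
    (⟨p, Q⟩ : Σ t : Finset V, Finpartition (s \ t)) = ⟨q, R⟩ := by
  subst h; exact congrArg _ (Finpartition.ext h2)

lemma pterm_eq_cpt_mul (f : V → W) {s : Finset V} (P : Finpartition s) {p : Finset V}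
    (hp : p ∈ P.parts) (Q : Finpartition (s \ p)) (hQ : Q.parts = P.parts.erase p) :
    pterm f P = cpt f p * pterm f Q := by
  have hparts : insert p Q.parts = P.parts := by rw [hQ, insert_erase hp]
  have hpQ : p ∉ Q.parts := by rw [hQ]; exact notMem_erase _ _
  have hcard : P.parts.card = Q.parts.card + 1 := by
    rw [← hparts, card_insert_of_notMem hpQ]
  have hps : p ⊆ s := P.le hp
  have hscard : (s \ p).card + p.card = s.card := card_sdiff_add_card_eq_card hps
  have hcond : (∀ q ∈ P.parts, ∀ x ∈ q, ∀ y ∈ q, f x = f y) ↔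
      ((∀ x ∈ p, ∀ y ∈ p, f x = f y) ∧ ∀ q ∈ Q.parts, ∀ x ∈ q, ∀ y ∈ q, f x = f y) := by
    rw [← hparts, forall_mem_insert]
  have hprod : (∏ q ∈ P.parts, Nat.factorial (q.card - 1))
      = Nat.factorial (p.card - 1) * ∏ q ∈ Q.parts, Nat.factorial (q.card - 1) := by
    rw [← hparts, prod_insert hpQ]
  rw [pterm, pterm, cpt]
  by_cases h1 : ∀ x ∈ p, ∀ y ∈ p, f x = f y
  · by_cases h2 : ∀ q ∈ Q.parts, ∀ x ∈ q, ∀ y ∈ q, f x = f y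
    · rw [if_pos (hcond.2 ⟨h1, h2⟩), if_pos h1, if_pos h2, hcard, hprod,
        show s.card + (Q.parts.card + 1) = (p.card + 1) + ((s \ p).card + Q.parts.card) by omega,
        pow_add]
      push_cast
      ring
    · rw [if_neg (fun hcc => h2 (hcond.1 hcc).2), if_neg h2, mul_zero]
  · rw [if_neg (fun hcc => h1 (hcond.1 hcc).1), if_neg h1, zero_mul]

lemma keyC (f : V → W) : ∀ (n : ℕ) (s : Finset V) [inst : Fintype (Finpartition s)],
    s.card ≤ n →
    (∑ P : Finpartition s, pterm f P) = if Set.InjOn f ↑s then 1 else 0 := by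
  intro n
  induction n with
  | zero =>
    intro s inst hs
    have hse : s = ∅ := card_eq_zero.1 (Nat.le_zero.1 hs)
    subst hse
    rw [keyC_empty, if_pos (by simp)]
  | succ n ih =>
    intro s inst hs
    rcases s.eq_empty_or_nonempty with rfl | ⟨a, ha⟩
    · rw [keyC_empty, if_pos (by simp)]
    have hxA : ∀ x : (Σ p : Finset V, Finpartition (s \ p)),
        x ∈ (s.powerset.filter fun p => a ∈ p).sigma
          (fun p => (Finset.univ : Finset (Finpartition (s \ p)))) → a ∈ x.1 ∧ x.1 ⊆ s := by
      intro x hx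
      rcases Finset.mem_sigma.1 hx with ⟨h1, -⟩
      rcases Finset.mem_filter.1 h1 with ⟨hps, hax⟩
      exact ⟨hax, Finset.mem_powerset.1 hps⟩
    have hb1 : ∀ x (hx : x ∈ (s.powerset.filter fun p => a ∈ p).sigma
          (fun p => (Finset.univ : Finset (Finpartition (s \ p))))), x.1 ≠ (⊥ : Finset V) :=
      fun x hx => Finset.nonempty_iff_ne_empty.1 ⟨a, (hxA x hx).1⟩
    have hb3 : ∀ x (hx : x ∈ (s.powerset.filter fun p => a ∈ p).sigma
          (fun p => (Finset.univ : Finset (Finpartition (s \ p))))), s \ x.1 ⊔ x.1 = s :=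
      fun x hx => sdiff_sup_cancel (Finset.le_iff_subset.2 (hxA x hx).2)
    have step1 : (∑ P : Finpartition s, pterm f P)
        = ∑ x ∈ (s.powerset.filter fun p => a ∈ p).sigma
            (fun p => (Finset.univ : Finset (Finpartition (s \ p)))),
            cpt f x.1 * pterm f x.2 := by
      refine Finset.sum_bij' (fun P _ => ⟨P.part a, P.avoid (P.part a)⟩)
        (fun x hx => x.2.extend (hb1 x hx) sdiff_disjoint (hb3 x hx)) ?_ ?_ ?_ ?_ ?_
      · intro P _
        exact Finset.mem_sigma.2 ⟨Finset.mem_filter.2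
          ⟨Finset.mem_powerset.2 (P.le (P.part_mem.2 ha)), P.mem_part ha⟩, Finset.mem_univ _⟩
      · intro x hx; exact Finset.mem_univ _
      · intro P _
        apply Finpartition.ext
        rw [Finpartition.extend_parts, avoid_parts_of_mem P (P.part_mem.2 ha),
          insert_erase (P.part_mem.2 ha)]
      · rintro ⟨p, Q⟩ hx
        have hmem : p ∈ (Q.extend (hb1 ⟨p, Q⟩ hx) sdiff_disjoint (hb3 ⟨p, Q⟩ hx)).parts := by
          rw [Finpartition.extend_parts]; exact mem_insert_self _ _
        have hpart : (Q.extend (hb1 ⟨p, Q⟩ hx) sdiff_disjoint (hb3 ⟨p, Q⟩ hx)).part a = p :=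
          Finpartition.part_eq_of_mem _ hmem (hxA ⟨p, Q⟩ hx).1
        have hpQ : p ∉ Q.parts := by
          intro h
          have h1 : a ∈ s \ p := Q.le h (hxA ⟨p, Q⟩ hx).1
          exact (Finset.mem_sdiff.1 h1).2 (hxA ⟨p, Q⟩ hx).1
        refine sigma_finpart_ext hpart ?_
        rw [hpart, avoid_parts_of_mem _ hmem, Finpartition.extend_parts, erase_insert hpQ]
      · intro P _
        exact pterm_eq_cpt_mul f P (P.part_mem.2 ha) _ (avoid_parts_of_mem P (P.part_mem.2 ha))
    rw [step1, Finset.sum_sigma]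
    have step2 : ∀ p ∈ s.powerset.filter (fun p => a ∈ p),
        (∑ Q : Finpartition (s \ p), cpt f p * pterm f Q)
          = cpt f p * (if Set.InjOn f ↑(s \ p) then 1 else 0) := by
      intro p hp
      rcases Finset.mem_filter.1 hp with ⟨hps, hap⟩
      rw [← Finset.mul_sum]
      congr 1
      apply ih
      have hss : s \ p ⊂ s := Finset.sdiff_ssubset (Finset.mem_powerset.1 hps) ⟨a, hap⟩
      have := Finset.card_lt_card hss
      omega
    rw [Finset.sum_congr rfl step2]
    by_cases hinj : Set.InjOn f ↑s
    · rw [if_pos hinj]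
      rw [Finset.sum_eq_single_of_mem ({a} : Finset V)
        (Finset.mem_filter.2 ⟨Finset.mem_powerset.2 (singleton_subset_iff.2 ha),
          mem_singleton_self a⟩)]
      · have hc : ∀ x ∈ ({a} : Finset V), ∀ y ∈ ({a} : Finset V), f x = f y := by
          intro x hx y hy; rw [mem_singleton.1 hx, mem_singleton.1 hy]
        have hI : Set.InjOn f ↑(s \ {a}) := hinj.mono (by
          exact_mod_cast Finset.coe_subset.2 (Finset.sdiff_subset))
        rw [cpt, if_pos hc, if_pos hI]
        simp
      · intro p hp hne
        rcases Finset.mem_filter.1 hp with ⟨hps, hap⟩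
        have hps' := Finset.mem_powerset.1 hps
        have hbex : ∃ b ∈ p, b ≠ a := by
          by_contra hcon
          push_neg at hcon
          exact hne (Finset.eq_singleton_iff_unique_mem.2 ⟨hap, fun b hbp => hcon b hbp⟩)
        obtain ⟨b, hbp, hba⟩ := hbex
        have hnc : ¬ (∀ x ∈ p, ∀ y ∈ p, f x = f y) := fun hcon =>
          hba (hinj (hps' hbp) (hps' hap) (hcon b hbp a hap))
        rw [cpt, if_neg hnc, zero_mul]
    · rw [if_neg hinj]
      set A' := s.filter (fun x => f x = f a) with hA'
      have haA' : a ∈ A' := Finset.mem_filter.2 ⟨ha, rfl⟩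
      have hA's : A' ⊆ s := Finset.filter_subset _ _
      have hfA' : ∀ x ∈ A', f x = f a := fun x hx => (Finset.mem_filter.1 hx).2
      by_cases h2 : Set.InjOn f ↑(s \ A')
      · -- the interesting case
        obtain ⟨x, hx, y, hy, hfxy, hxy⟩ : ∃ x ∈ s, ∃ y ∈ s, f x = f y ∧ x ≠ y := by
          rw [Set.InjOn] at hinj
          push_neg at hinj
          obtain ⟨x, hx, y, hy, h1, h2'⟩ := hinj
          exact ⟨x, by exact_mod_cast hx, y, by exact_mod_cast hy, h1, h2'⟩
        have hm2 : 2 ≤ A'.card := by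
          by_cases hxa : f x = f a
          · have hxA : x ∈ A' := Finset.mem_filter.2 ⟨hx, hxa⟩
            have hyA : y ∈ A' := Finset.mem_filter.2 ⟨hy, by rw [← hfxy]; exact hxa⟩
            exact Finset.one_lt_card.2 ⟨x, hxA, y, hyA, hxy⟩
          · exfalso
            have hxs : x ∈ s \ A' := Finset.mem_sdiff.2 ⟨hx, fun hxx => hxa (hfA' x hxx)⟩
            have hys : y ∈ s \ A' := Finset.mem_sdiff.2
              ⟨hy, fun hyy => hxa (by rw [hfxy]; exact hfA' y hyy)⟩
            exact hxy (h2 (by exact_mod_cast hxs) (by exact_mod_cast hys) hfxy)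
        obtain ⟨k, hk⟩ : ∃ k, A'.card = k + 2 := ⟨A'.card - 2, by omega⟩
        have hsub : insert A' ((A'.erase a).image (fun b => A'.erase b))
            ⊆ s.powerset.filter (fun p => a ∈ p) := by
          intro p hploc
          rcases Finset.mem_insert.1 hploc with rfl | hpim
          · exact Finset.mem_filter.2 ⟨Finset.mem_powerset.2 hA's, haA'⟩
          · obtain ⟨b, hb, rfl⟩ := Finset.mem_image.1 hpim
            rcases Finset.mem_erase.1 hb with ⟨hba, hbA⟩
            exact Finset.mem_filter.2 ⟨Finset.mem_powerset.2 ((Finset.erase_subset _ _).trans hA's),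
              Finset.mem_erase.2 ⟨fun h => hba h.symm, haA'⟩⟩
        have hvanish : ∀ p ∈ s.powerset.filter (fun p => a ∈ p),
            p ∉ insert A' ((A'.erase a).image (fun b => A'.erase b)) →
            cpt f p * (if Set.InjOn f ↑(s \ p) then 1 else 0) = 0 := by
          intro p hpA hpB
          by_cases hc : ∀ x ∈ p, ∀ y ∈ p, f x = f y
          · rcases Finset.mem_filter.1 hpA with ⟨hps, hap⟩
            have hpA' : p ⊆ A' := fun z hz =>
              Finset.mem_filter.2 ⟨Finset.mem_powerset.1 hps hz, hc z hz a hap⟩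
            by_cases hI : Set.InjOn f ↑(s \ p)
            · exfalso
              apply hpB
              have hcard1 : (A' \ p).card ≤ 1 := by
                rw [Finset.card_le_one]
                intro b hbmem c hcmem
                rcases Finset.mem_sdiff.1 hbmem with ⟨hbA, hbp⟩
                rcases Finset.mem_sdiff.1 hcmem with ⟨hcA, hcp⟩
                exact hI (by exact_mod_cast Finset.mem_sdiff.2 ⟨hA's hbA, hbp⟩)
                  (by exact_mod_cast Finset.mem_sdiff.2 ⟨hA's hcA, hcp⟩)
                  (by rw [hfA' b hbA, hfA' c hcA])
              rcases Nat.le_one_iff_eq_zero_or_eq_one.1 hcard1 with h0 | h1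
              · have : A' ⊆ p := by
                  rw [← Finset.sdiff_eq_empty_iff_subset]
                  exact Finset.card_eq_zero.1 h0
                have : p = A' := Finset.Subset.antisymm hpA' this
                rw [this]; exact Finset.mem_insert_self _ _
              · obtain ⟨b, hbeq⟩ := Finset.card_eq_one.1 h1
                have hbm : b ∈ A' ∧ b ∉ p := Finset.mem_sdiff.1 (hbeq ▸ Finset.mem_singleton_self b)
                have hba : b ≠ a := fun h => hbm.2 (h ▸ hap)
                have hpe : p = A'.erase b := by
                  ext z
                  rw [Finset.mem_erase]
                  constructor
                  · intro hzp; exact ⟨fun h => hbm.2 (h ▸ hzp), hpA' hzp⟩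
                  · rintro ⟨hzb, hzA⟩
                    by_contra hzp
                    have hzmem : z ∈ A' \ p := Finset.mem_sdiff.2 ⟨hzA, hzp⟩
                    rw [hbeq] at hzmem
                    exact hzb (Finset.mem_singleton.1 hzmem)
                rw [hpe]
                exact Finset.mem_insert.2 (Or.inr
                  (Finset.mem_image.2 ⟨b, Finset.mem_erase.2 ⟨hba, hbm.1⟩, rfl⟩))
            · rw [if_neg hI, mul_zero]
          · rw [cpt, if_neg hc, zero_mul]
        rw [← Finset.sum_subset hsub hvanish]
        have hnotmem : A' ∉ (A'.erase a).image (fun b => A'.erase b) := by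
          intro hmem
          obtain ⟨b, hb, heq⟩ := Finset.mem_image.1 hmem
          have hbA : b ∈ A' := (Finset.mem_erase.1 hb).2
          have hcon : b ∉ A'.erase b := Finset.notMem_erase _ _
          rw [heq] at hcon
          exact hcon hbA
        rw [Finset.sum_insert hnotmem, Finset.sum_image (fun b hb c hc heq => by
          by_contra hne
          have hmm : b ∈ A'.erase c := Finset.mem_erase.2 ⟨hne, (Finset.mem_erase.1 hb).2⟩
          rw [← heq] at hmm
          exact Finset.notMem_erase b A' hmm)]
        have hconstA' : ∀ z ∈ A', ∀ w ∈ A', f z = f w := fun z hz w hw => by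
          rw [hfA' z hz, hfA' w hw]
        have hterm1 : cpt f A' * (if Set.InjOn f ↑(s \ A') then 1 else 0)
            = (-1 : ℤ) ^ (k + 3) * ((k + 1).factorial : ℤ) := by
          rw [cpt, if_pos hconstA', if_pos h2, hk]
          norm_num [show k + 2 - 1 = k + 1 by omega, show k + 2 + 1 = k + 3 by omega]
        have hterm2 : ∀ b ∈ A'.erase a,
            cpt f (A'.erase b) * (if Set.InjOn f ↑(s \ A'.erase b) then 1 else 0)
            = (-1 : ℤ) ^ (k + 2) * (k.factorial : ℤ) := by
          intro b hb
          rcases Finset.mem_erase.1 hb with ⟨hba, hbA⟩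
          have hconst : ∀ z ∈ A'.erase b, ∀ w ∈ A'.erase b, f z = f w := fun z hz w hw =>
            hconstA' z (Finset.mem_of_mem_erase hz) w (Finset.mem_of_mem_erase hw)
          have hcardE : (A'.erase b).card = k + 1 := by
            rw [Finset.card_erase_of_mem hbA, hk]
            omega
          have hIe : Set.InjOn f ↑(s \ A'.erase b) := by
            intro z hz w hw hfzw
            have hz' : z ∈ s ∧ z ∉ A'.erase b := by
              have := Finset.mem_coe.1 hz
              exact Finset.mem_sdiff.1 this
            have hw' : w ∈ s ∧ w ∉ A'.erase b := by
              have := Finset.mem_coe.1 hw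
              exact Finset.mem_sdiff.1 this
            have hzc : z = b ∨ z ∉ A' := by
              by_cases hzA : z ∈ A'
              · left
                by_contra hzb
                exact hz'.2 (Finset.mem_erase.2 ⟨hzb, hzA⟩)
              · right; exact hzA
            have hwc : w = b ∨ w ∉ A' := by
              by_cases hwA : w ∈ A'
              · left
                by_contra hwb
                exact hw'.2 (Finset.mem_erase.2 ⟨hwb, hwA⟩)
              · right; exact hwA
            rcases hzc with rfl | hzA
            · rcases hwc with rfl | hwA
              · rfl
              · exfalso
                exact hwA (Finset.mem_filter.2 ⟨hw'.1, by rw [← hfzw, hfA' z hbA]⟩)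
            · rcases hwc with rfl | hwA
              · exfalso
                exact hzA (Finset.mem_filter.2 ⟨hz'.1, by rw [hfzw, hfA' w hbA]⟩)
              · exact h2 (by exact_mod_cast Finset.mem_sdiff.2 ⟨hz'.1, hzA⟩)
                  (by exact_mod_cast Finset.mem_sdiff.2 ⟨hw'.1, hwA⟩) hfzw
          rw [cpt, if_pos hconst, if_pos hIe, hcardE]
          norm_num
        rw [hterm1, Finset.sum_congr rfl hterm2, Finset.sum_const,
          Finset.card_erase_of_mem haA', hk]
        show (-1 : ℤ) ^ (k + 3) * ((k + 1).factorial : ℤ)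
          + (k + 2 - 1) • ((-1 : ℤ) ^ (k + 2) * (k.factorial : ℤ)) = 0
        rw [show k + 2 - 1 = k + 1 by omega]
        push_cast [Nat.factorial_succ]
        ring
      · apply Finset.sum_eq_zero
        intro p hp
        by_cases hc : ∀ z ∈ p, ∀ w ∈ p, f z = f w
        · rcases Finset.mem_filter.1 hp with ⟨hps, hap⟩
          have hpA' : p ⊆ A' := fun z hz =>
            Finset.mem_filter.2 ⟨Finset.mem_powerset.1 hps hz, hc z hz a hap⟩
          have hnI : ¬ Set.InjOn f ↑(s \ p) := fun hI => h2 (hI.mono (by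
            exact_mod_cast Finset.coe_subset.2 (Finset.sdiff_subset_sdiff le_rfl hpA')))
          rw [if_neg hnI, mul_zero]
        · rw [cpt, if_neg hc, zero_mul]

end Key2

section Graph

variable {W : Type} [Fintype W] (G : SimpleGraph V) (H : SimpleGraph W)

noncomputable instance : Fintype (G →g H) :=
  Fintype.ofInjective (fun f => (f : V → W)) DFunLike.coe_injective

noncomputable def homEquiv (P : Finpartition (Finset.univ : Finset V))
    (hP : ∀ p ∈ P.parts, ∀ x ∈ p, ∀ y ∈ p, ¬ G.Adj x y) :
    (quotGraph G P →g H) ≃ {f : G →g H // ∀ p ∈ P.parts, ∀ x ∈ p, ∀ y ∈ p, f x = f y} where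
  toFun g := ⟨
    { toFun := fun v => g ⟨P.part v, P.part_mem.2 (mem_univ v)⟩
      map_rel' := by
        intro x y hxy
        apply g.map_rel'
        refine ⟨?_, x, P.mem_part (mem_univ x), y, P.mem_part (mem_univ y), hxy⟩
        intro heq
        have hpp : P.part x = P.part y := congrArg Subtype.val heq
        exact hP (P.part x) (P.part_mem.2 (mem_univ x)) x (P.mem_part (mem_univ x)) y
          (hpp ▸ P.mem_part (mem_univ y)) hxy },
    by
      intro p hp x hx y hy
      have h1 : P.part x = p := P.part_eq_of_mem hp hx
      have h2 : P.part y = p := P.part_eq_of_mem hp hy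
      exact congrArg g (Subtype.ext (h1.trans h2.symm))⟩
  invFun f :=
    { toFun := fun q => f.1 ((P.nonempty_of_mem_parts q.2).choose)
      map_rel' := by
        rintro q r ⟨hne, x, hx, y, hy, hxy⟩
        have hq := (P.nonempty_of_mem_parts q.2).choose_spec
        have hr := (P.nonempty_of_mem_parts r.2).choose_spec
        have e1 : f.1 ((P.nonempty_of_mem_parts q.2).choose) = f.1 x := f.2 q.1 q.2 _ hq x hx
        have e2 : f.1 ((P.nonempty_of_mem_parts r.2).choose) = f.1 y := f.2 r.1 r.2 _ hr y hy
        show H.Adj (f.1 _) (f.1 _)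
        rw [e1, e2]
        exact f.1.map_rel' hxy }
  left_inv g := by
    ext q
    exact congrArg g (Subtype.ext (P.part_eq_of_mem q.2 (P.nonempty_of_mem_parts q.2).choose_spec))
  right_inv f := by
    apply Subtype.ext
    ext v
    exact f.2 (P.part v) (P.part_mem.2 (mem_univ v)) _
      (P.nonempty_of_mem_parts (P.part_mem.2 (mem_univ v))).choose_spec v (P.mem_part (mem_univ v))

lemma homCount_eq (P : Finpartition (Finset.univ : Finset V))
    (hP : ∀ p ∈ P.parts, ∀ x ∈ p, ∀ y ∈ p, ¬ G.Adj x y) :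
    (homCount (quotGraph G P) H : ℤ) =
      ∑ f : G →g H, (if (∀ p ∈ P.parts, ∀ x ∈ p, ∀ y ∈ p, f x = f y) then 1 else 0) := by
  rw [homCount, Nat.card_congr (homEquiv G H P hP), Nat.card_eq_fintype_card,
    Fintype.card_subtype, Finset.card_filter]
  push_cast
  rfl

lemma injCount_eq :
    (injCount G H : ℤ) = ∑ f : G →g H, (if Function.Injective (f : V → W) then 1 else 0) := by
  rw [injCount, Nat.card_eq_fintype_card, Fintype.card_subtype, Finset.card_filter]
  push_cast
  rfl

end Graph

/-- `inj(G,H) = Σ_P (-1)^{|V(G)|+|V(G/P)|} (Π_{p∈P} (|p|-1)!) hom(G/P,H)`, where the sum runs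
over all partitions `P` of `V(G)` into independent sets. -/
theorem injCount_eq_sum_partitions {V W : Type} [Fintype V] [DecidableEq V] [Fintype W]
    (G : SimpleGraph V) (H : SimpleGraph W) :
    (injCount G H : ℤ) =
      ∑ P ∈ Finset.univ.filter
          (fun P : Finpartition (Finset.univ : Finset V) =>
            ∀ p ∈ P.parts, ∀ x ∈ p, ∀ y ∈ p, ¬ G.Adj x y),
        (-1 : ℤ) ^ (Fintype.card V + P.parts.card) *
          ((∏ p ∈ P.parts, Nat.factorial (p.card - 1) : ℕ) : ℤ) * homCount (quotGraph G P) H := by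
  have step1 : ∀ P : Finpartition (Finset.univ : Finset V),
      (∀ p ∈ P.parts, ∀ x ∈ p, ∀ y ∈ p, ¬ G.Adj x y) →
      (-1 : ℤ) ^ (Fintype.card V + P.parts.card) *
        ((∏ p ∈ P.parts, Nat.factorial (p.card - 1) : ℕ) : ℤ) * (homCount (quotGraph G P) H : ℤ)
      = ∑ f : G →g H, pterm (⇑f) P := by
    intro P hP
    rw [homCount_eq G H P hP, Finset.mul_sum]
    apply Finset.sum_congr rfl
    intro f _
    rw [pterm]
    by_cases hc : ∀ p ∈ P.parts, ∀ x ∈ p, ∀ y ∈ p, f x = f y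
    · rw [if_pos hc, if_pos hc, mul_one, card_univ]
    · rw [if_neg hc, if_neg hc, mul_zero]
  rw [Finset.sum_congr rfl (fun P hP => step1 P (Finset.mem_filter.1 hP).2), Finset.sum_comm]
  have step2 : ∀ f : G →g H,
      (∑ P ∈ Finset.univ.filter (fun P : Finpartition (Finset.univ : Finset V) =>
        ∀ p ∈ P.parts, ∀ x ∈ p, ∀ y ∈ p, ¬ G.Adj x y), pterm (⇑f) P)
      = ∑ P : Finpartition (Finset.univ : Finset V), pterm (⇑f) P := by
    intro f
    apply Finset.sum_subset (Finset.filter_subset _ _)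
    intro P _ hPn
    rw [Finset.mem_filter] at hPn
    push_neg at hPn
    obtain ⟨p, hp, x, hx, y, hy, hadj⟩ := hPn (Finset.mem_univ P)
    rw [pterm, if_neg]
    intro hc
    have hHadj := f.map_adj hadj
    rw [hc p hp x hx y hy] at hHadj
    exact H.irrefl hHadj
  rw [Finset.sum_congr rfl (fun f _ => step2 f),
    Finset.sum_congr rfl
      (fun (f : G →g H) _ => keyC (⇑f) (Fintype.card V) Finset.univ (le_of_eq card_univ)),
    injCount_eq G H]
  apply Finset.sum_congr rfl
  intro f _
  simp [Set.injOn_univ]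
end

section
/- Suppose the finite simple graphs G and H both have girth at least g and |E(G)| = |E(H)|. Then the chromatic coefficients satisfy e_i(G) = e_i(H) for all i = 0, 1, ..., g-2. -/
open Polynomial

namespace ChromaticAux
open SimpleGraph

variable {V : Type*}

/-- Number of connected components of the graph on `V` with edge set `S`. -/
private noncomputable def cc (S : Finset (Sym2 V)) : ℕ :=
  Nat.card (SimpleGraph.fromEdgeSet (↑S : Set (Sym2 V))).ConnectedComponent

private instance finiteCC [Finite V] (Γ : SimpleGraph V) : Finite Γ.ConnectedComponent :=
  Finite.of_surjective Γ.connectedComponentMk (fun C => C.exists_rep)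

private lemma mem_support_reachable {Γ : SimpleGraph V} {u v w : V} (p : Γ.Walk u v)
    (h : w ∈ p.support) : Γ.Reachable u w := by
  induction p with
  | nil => simp at h; exact h ▸ Reachable.refl _
  | cons hadj p ih =>
    rw [SimpleGraph.Walk.support_cons, List.mem_cons] at h
    rcases h with rfl | h
    · exact Reachable.refl _
    · exact (hadj.reachable).trans (ih h)

private lemma card_comp_add_le [Fintype V] (Γ : SimpleGraph V) (A : Finset V) (hne : A.Nonempty)
    (hA : ∀ a ∈ A, ∀ b ∈ A, Γ.Reachable a b) :
    Nat.card Γ.ConnectedComponent + A.card ≤ Fintype.card V + 1 := by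
  classical
  obtain ⟨a₀, ha₀⟩ := hne
  have hsurj : Function.Surjective
      (fun z : {x : V // x ∉ A} ⊕ Unit => match z with
        | Sum.inl v => Γ.connectedComponentMk v.1
        | Sum.inr _ => Γ.connectedComponentMk a₀) := by
    intro C
    obtain ⟨v, rfl⟩ := C.exists_rep
    by_cases hv : v ∈ A
    · exact ⟨Sum.inr ⟨⟩, ConnectedComponent.sound (hA a₀ ha₀ v hv)⟩
    · exact ⟨Sum.inl ⟨v, hv⟩, rfl⟩
  have h1 : Nat.card Γ.ConnectedComponent ≤ Nat.card ({x : V // x ∉ A} ⊕ Unit) :=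
    Nat.card_le_card_of_surjective _ hsurj
  have h2 : Nat.card ({x : V // x ∉ A} ⊕ Unit) = (Fintype.card V - A.card) + 1 := by
    have : Nat.card Unit = 1 := Nat.card_unique
    rw [Nat.card_sum, this, Nat.card_eq_fintype_card, Fintype.card_subtype_compl]
    simp [Fintype.card_subtype]
  have h3 : A.card ≤ Fintype.card V := A.card_le_univ
  omega

private lemma card_comp_bot [Fintype V] :
    Nat.card (⊥ : SimpleGraph V).ConnectedComponent = Fintype.card V := by
  have hb : Function.Bijective (fun v => (⊥ : SimpleGraph V).connectedComponentMk v) := by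
    constructor
    · intro u v h
      exact reachable_bot.mp (ConnectedComponent.eq.mp h)
    · intro C; obtain ⟨v, rfl⟩ := C.exists_rep; exact ⟨v, rfl⟩
  rw [← Nat.card_eq_fintype_card]
  exact (Nat.card_eq_of_bijective _ hb).symm

private lemma reach_cases {Γ Γ' : SimpleGraph V} {x y : V}
    (hadj : ∀ u v, Γ'.Adj u v → Γ.Adj u v ∨ (u = x ∧ v = y) ∨ (u = y ∧ v = x)) :
    ∀ {u v}, Γ'.Reachable u v → Γ.Reachable u v ∨ (Γ.Reachable u x ∧ Γ.Reachable y v)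
      ∨ (Γ.Reachable u y ∧ Γ.Reachable x v) := by
  intro u v h
  obtain ⟨p⟩ := h
  induction p with
  | nil => exact Or.inl (Reachable.refl _)
  | @cons u w v h' p ih =>
    rcases hadj _ _ h' with ha | ⟨rfl, rfl⟩ | ⟨rfl, rfl⟩
    · rcases ih with hr | ⟨h1, h2⟩ | ⟨h1, h2⟩
      · exact Or.inl (ha.reachable.trans hr)
      · exact Or.inr (Or.inl ⟨ha.reachable.trans h1, h2⟩)
      · exact Or.inr (Or.inr ⟨ha.reachable.trans h1, h2⟩)
    · rcases ih with hr | ⟨h1, h2⟩ | ⟨h1, h2⟩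
      · exact Or.inr (Or.inl ⟨Reachable.refl _, hr⟩)
      · exact Or.inl (h1.symm.trans h2)
      · exact Or.inl h2
    · rcases ih with hr | ⟨h1, h2⟩ | ⟨h1, h2⟩
      · exact Or.inr (Or.inr ⟨Reachable.refl _, hr⟩)
      · exact Or.inl h2
      · exact Or.inl (h1.symm.trans h2)

private lemma card_comp_add_edge [Fintype V] {Γ Γ' : SimpleGraph V} {x y : V}
    (hle : Γ ≤ Γ')
    (hadj : ∀ u v, Γ'.Adj u v → Γ.Adj u v ∨ (u = x ∧ v = y) ∨ (u = y ∧ v = x))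
    (hxy' : Γ'.Adj x y)
    (hxy : ¬ Γ.Reachable x y) :
    Nat.card Γ.ConnectedComponent = Nat.card Γ'.ConnectedComponent + 1 := by
  classical
  set φ : Γ.ConnectedComponent → Γ'.ConnectedComponent :=
    ConnectedComponent.map (Hom.ofLE hle) with hφ
  have hφmk : ∀ v, φ (Γ.connectedComponentMk v) = Γ'.connectedComponentMk v := fun v => rfl
  have hbij : Function.Bijective
      (fun C : {C : Γ.ConnectedComponent // C ≠ Γ.connectedComponentMk y} => φ C.1) := by
    constructor
    · rintro ⟨C₁, h₁⟩ ⟨C₂, h₂⟩ h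
      obtain ⟨u, rfl⟩ := C₁.exists_rep
      obtain ⟨v, rfl⟩ := C₂.exists_rep
      simp only [hφmk] at h
      have hr : Γ'.Reachable u v := ConnectedComponent.eq.mp h
      apply Subtype.ext
      rcases reach_cases hadj hr with h' | ⟨ha, hb⟩ | ⟨ha, hb⟩
      · exact ConnectedComponent.eq.mpr h'
      · exact absurd (ConnectedComponent.eq.mpr hb.symm) h₂
      · exact absurd (ConnectedComponent.eq.mpr ha) h₁
    · intro C'
      obtain ⟨v, rfl⟩ := C'.exists_rep
      by_cases h : Γ.Reachable v y
      · refine ⟨⟨Γ.connectedComponentMk x, fun he => hxy (ConnectedComponent.eq.mp he)⟩, ?_⟩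
        simp only [hφmk]
        exact ConnectedComponent.eq.mpr (hxy'.reachable.trans ((h.mono hle).symm))
      · exact ⟨⟨Γ.connectedComponentMk v, fun he => h (ConnectedComponent.eq.mp he)⟩, rfl⟩
  have h1 : Nat.card {C : Γ.ConnectedComponent // C ≠ Γ.connectedComponentMk y}
      = Nat.card Γ'.ConnectedComponent := Nat.card_eq_of_bijective _ hbij
  have h2 : Nat.card Γ.ConnectedComponent
      = Nat.card {C : Γ.ConnectedComponent // C = Γ.connectedComponentMk y}
        + Nat.card {C : Γ.ConnectedComponent // C ≠ Γ.connectedComponentMk y} := by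
    rw [← Nat.card_sum]
    exact Nat.card_eq_of_bijective _ (Equiv.sumCompl (· = Γ.connectedComponentMk y)).bijective |>.symm
  haveI : Unique {C : Γ.ConnectedComponent // C = Γ.connectedComponentMk y} :=
    ⟨⟨⟨_, rfl⟩⟩, by rintro ⟨C, rfl⟩; rfl⟩
  rw [h2, h1, Nat.card_unique, add_comm]

private lemma isAcyclic_mono {Γ Γ' : SimpleGraph V} (hle : Γ ≤ Γ') (h : Γ'.IsAcyclic) :
    Γ.IsAcyclic := fun _ c hc => h (c.mapLe hle) (hc.mapLe hle)

private lemma forest_card [Fintype V] (S : Finset (Sym2 V)) (hd : ∀ e ∈ S, ¬ e.IsDiag)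
    (ha : (fromEdgeSet (S : Set (Sym2 V))).IsAcyclic) :
    cc S + S.card = Fintype.card V := by
  classical
  induction S using Finset.induction_on with
  | empty =>
    simpa [cc, fromEdgeSet_empty, Nat.card_eq_fintype_card] using
      (Nat.card_eq_fintype_card (α := (⊥ : SimpleGraph V).ConnectedComponent)) ▸ card_comp_bot (V := V)
  | @insert e T he ih =>
    induction e using Sym2.ind with
    | _ x y =>
    have hxy : x ≠ y := by
      have := hd s(x, y) (Finset.mem_insert_self _ _)
      simpa [Sym2.isDiag_iff_proj_eq] using this
    set Γ : SimpleGraph V := fromEdgeSet (T : Set (Sym2 V)) with hΓ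
    set Γ' : SimpleGraph V := fromEdgeSet ((insert s(x,y) T : Finset (Sym2 V)) : Set (Sym2 V)) with hΓ'
    have hle : Γ ≤ Γ' := fromEdgeSet_mono (by
      rw [Finset.coe_insert]; exact Set.subset_insert _ _)
    have hadj : ∀ u v, Γ'.Adj u v → Γ.Adj u v ∨ (u = x ∧ v = y) ∨ (u = y ∧ v = x) := by
      intro u v h
      rw [hΓ', fromEdgeSet_adj _, Finset.coe_insert, Set.mem_insert_iff] at h
      obtain ⟨h1 | h1, h2⟩ := h
      · rcases Sym2.eq_iff.mp h1 with ⟨rfl, rfl⟩ | ⟨rfl, rfl⟩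
        · exact Or.inr (Or.inl ⟨rfl, rfl⟩)
        · exact Or.inr (Or.inr ⟨rfl, rfl⟩)
      · exact Or.inl ((fromEdgeSet_adj _).mpr ⟨h1, h2⟩)
    have hxy' : Γ'.Adj x y := by
      rw [hΓ', fromEdgeSet_adj _]
      exact ⟨by simp, hxy⟩
    have hreach : ¬ Γ.Reachable x y := by
      intro hr
      obtain ⟨w⟩ := hr
      let p := w.toPath
      have hedges : ∀ e' ∈ (p : Γ.Walk x y).edges, e' ∈ Γ'.edgeSet :=
        fun e' h' => (edgeSet_subset_edgeSet.mpr hle) ((p : Γ.Walk x y).edges_subset_edgeSet h')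
      let q : Γ'.Walk x y := (p : Γ.Walk x y).transfer Γ' hedges
      have hq : q.IsPath := (p.2).transfer hedges
      have hni : s(y, x) ∉ q.edges := by
        rw [SimpleGraph.Walk.edges_transfer]
        intro hmem
        have : s(y, x) ∈ Γ.edgeSet := (p : Γ.Walk x y).edges_subset_edgeSet hmem
        rw [hΓ, edgeSet_fromEdgeSet] at this
        have : s(y, x) ∈ (T : Set (Sym2 V)) := this.1
        rw [Sym2.eq_swap] at this
        exact he (by exact_mod_cast this)
      have hcyc : (SimpleGraph.Walk.cons hxy'.symm q).IsCycle :=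
        (SimpleGraph.Walk.cons_isCycle_iff q hxy'.symm).mpr ⟨hq, hni⟩
      exact ha _ hcyc
    have hstep := card_comp_add_edge hle hadj hxy' hreach
    have hT : ∀ e ∈ T, ¬ e.IsDiag := fun e h => hd e (Finset.mem_insert_of_mem h)
    have haT : Γ.IsAcyclic := isAcyclic_mono hle ha
    have hIH : Nat.card (fromEdgeSet (↑T : Set (Sym2 V))).ConnectedComponent + T.card
        = Fintype.card V := ih hT haT
    have hstep' : Nat.card (fromEdgeSet (↑T : Set (Sym2 V))).ConnectedComponent
        = Nat.card (fromEdgeSet ((insert s(x,y) T : Finset (Sym2 V)) : Set (Sym2 V))).ConnectedComponent + 1 := hstep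
    show Nat.card (fromEdgeSet ((insert s(x,y) T : Finset (Sym2 V)) : Set (Sym2 V))).ConnectedComponent
        + (insert s(x,y) T).card = Fintype.card V
    rw [Finset.card_insert_of_notMem he]
    omega

private lemma cycle_consequences [Fintype V] {G : SimpleGraph V} {g : ℕ}
    (hG : (g : ℕ∞) ≤ G.egirth) {S : Finset (Sym2 V)} (hS : ↑S ⊆ G.edgeSet)
    (hnac : ¬ (fromEdgeSet (S : Set (Sym2 V))).IsAcyclic) :
    ∃ ℓ, 3 ≤ ℓ ∧ g ≤ ℓ ∧ ℓ ≤ S.card ∧ cc S + ℓ ≤ Fintype.card V + 1 := by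
  classical
  simp only [IsAcyclic, not_forall, not_not] at hnac
  set Γ : SimpleGraph V := fromEdgeSet (S : Set (Sym2 V)) with hΓ
  obtain ⟨v, p, hp⟩ := hnac
  have hedgesS : ∀ e ∈ p.edges, e ∈ (S : Set (Sym2 V)) := by
    intro e he
    have := p.edges_subset_edgeSet he
    rw [hΓ, edgeSet_fromEdgeSet] at this
    exact this.1
  have hedge : ∀ e ∈ p.edges, e ∈ G.edgeSet := fun e he => hS (hedgesS e he)
  have hcyc' : (p.transfer G hedge).IsCycle := hp.transfer hedge
  have hg : g ≤ p.length := by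
    have h1 := SimpleGraph.le_egirth.mp hG v (p.transfer G hedge) hcyc'
    rw [SimpleGraph.Walk.length_transfer] at h1
    exact_mod_cast h1
  have h3 : 3 ≤ p.length := hp.three_le_length
  have hcard : p.length ≤ S.card := by
    have hnd : p.edges.Nodup := hp.isCircuit.isTrail.edges_nodup
    have hsub : p.edges.toFinset ⊆ S := by
      intro e he
      rw [List.mem_toFinset] at he
      exact_mod_cast hedgesS e he
    calc p.length = p.edges.length := (SimpleGraph.Walk.length_edges p).symm
      _ = p.edges.toFinset.card := (List.toFinset_card_of_nodup hnd).symm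
      _ ≤ S.card := Finset.card_le_card hsub
  have hcomp : cc S + p.length ≤ Fintype.card V + 1 := by
    have hnd : p.support.tail.Nodup := hp.support_nodup
    have hc : p.support.tail.toFinset.card = p.length := by
      rw [List.toFinset_card_of_nodup hnd, List.length_tail, SimpleGraph.Walk.length_support]
      omega
    have hne : p.support.tail.toFinset.Nonempty := by
      rw [← Finset.card_pos, hc]; omega
    have hreach : ∀ a ∈ p.support.tail.toFinset, ∀ b ∈ p.support.tail.toFinset,
        Γ.Reachable a b := by
      intro a ha b hb
      rw [List.mem_toFinset] at ha hb
      exact (mem_support_reachable p (List.mem_of_mem_tail ha)).symm.trans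
        (mem_support_reachable p (List.mem_of_mem_tail hb))
    have := card_comp_add_le Γ _ hne hreach
    rw [hc] at this
    exact this
  exact ⟨p.length, h3, hg, hcard, hcomp⟩

private lemma cc_eq_iff [Fintype V] {G : SimpleGraph V} {g : ℕ}
    (hG : (g : ℕ∞) ≤ G.egirth) {S : Finset (Sym2 V)} (hS : ↑S ⊆ G.edgeSet)
    {i : ℕ} (hi : i ≤ g - 2) (hin : i ≤ Fintype.card V) :
    cc S = Fintype.card V - i ↔ S.card = i := by
  have hd : ∀ e ∈ S, ¬ e.IsDiag := fun e he => G.not_isDiag_of_mem_edgeSet (hS he)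
  constructor
  · intro hcc
    have hac : (fromEdgeSet (S : Set (Sym2 V))).IsAcyclic := by
      by_contra hnac
      obtain ⟨ℓ, h3, hg, _, hcomp⟩ := cycle_consequences hG hS hnac
      omega
    have := forest_card S hd hac
    omega
  · intro hcard
    have hac : (fromEdgeSet (S : Set (Sym2 V))).IsAcyclic := by
      by_contra hnac
      obtain ⟨ℓ, h3, hg, hcard', _⟩ := cycle_consequences hG hS hnac
      omega
    have := forest_card S hd hac
    omega

private lemma card_mono_functions [Fintype V] (q : ℕ) (S : Finset (Sym2 V)) :
    Nat.card {f : V → Fin q // ∀ ⦃a b⦄, (fromEdgeSet (S : Set (Sym2 V))).Adj a b → f a = f b}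
      = q ^ cc S := by
  have e : {f : V → Fin q // ∀ ⦃a b⦄, (fromEdgeSet (S : Set (Sym2 V))).Adj a b → f a = f b}
      ≃ ((fromEdgeSet (S : Set (Sym2 V))).ConnectedComponent → Fin q) :=
    { toFun := fun f => ConnectedComponent.lift f.1 (by
        intro v w p hp
        clear hp
        induction p with
        | nil => rfl
        | cons h p ih => exact (f.2 h).trans ih)
      invFun := fun g => ⟨fun v => g ((fromEdgeSet (S : Set (Sym2 V))).connectedComponentMk v),
        fun a b hab => congrArg g (ConnectedComponent.sound hab.reachable)⟩
      left_inv := fun f => Subtype.ext rfl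
      right_inv := fun g => by funext C; obtain ⟨v, rfl⟩ := C.exists_rep; rfl }
  rw [Nat.card_congr e, Nat.card_fun]
  simp [cc]

private def Mono {q : ℕ} (f : V → Fin q) (e : Sym2 V) : Prop :=
  ∀ a b, e = s(a, b) → f a = f b

private lemma mono_mk {q : ℕ} (f : V → Fin q) (x y : V) : Mono f s(x, y) ↔ f x = f y := by
  constructor
  · exact fun h => h x y rfl
  · intro hf a b hab
    rcases Sym2.eq_iff.mp hab with ⟨rfl, rfl⟩ | ⟨rfl, rfl⟩
    · exact hf
    · exact hf.symm

private lemma incl_excl [Fintype V] (G : SimpleGraph V) (E : Finset (Sym2 V))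
    (hE : (E : Set (Sym2 V)) = G.edgeSet) (q : ℕ) :
    (properColorings G q : ℤ) = ∑ S ∈ E.powerset, (-1 : ℤ) ^ S.card * (q : ℤ) ^ (cc S) := by
  classical
  have hmem : ∀ {e}, e ∈ E ↔ e ∈ G.edgeSet := by
    intro e; rw [← hE]; exact Iff.rfl
  have h1 : (properColorings G q : ℤ)
      = ∑ f : V → Fin q, if (∀ ⦃x y⦄, G.Adj x y → f x ≠ f y) then (1 : ℤ) else 0 := by
    rw [properColorings, Nat.card_eq_fintype_card, Fintype.card_subtype, Finset.card_filter]
    push_cast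
    rfl
  have h2 : ∀ f : V → Fin q, (if (∀ ⦃x y⦄, G.Adj x y → f x ≠ f y) then (1 : ℤ) else 0)
      = ∏ e ∈ E, ((-(if Mono f e then (1 : ℤ) else 0)) + 1) := by
    intro f
    have hfac : ∀ e ∈ E, ((-(if Mono f e then (1 : ℤ) else 0)) + 1)
        = (if Mono f e then 0 else 1) := by
      intro e _; split_ifs <;> ring
    rw [Finset.prod_congr rfl hfac]
    split_ifs with h
    · refine (Finset.prod_eq_one ?_).symm
      intro e he
      rw [if_neg]
      induction e using Sym2.ind with
      | _ a b =>
        intro hm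
        exact h ((mem_edgeSet G).mp (hmem.mp he)) (hm a b rfl)
    · push_neg at h
      obtain ⟨x, y, hadj, hf⟩ := h
      refine (Finset.prod_eq_zero (i := s(x, y)) (hmem.mpr ((mem_edgeSet G).mpr hadj)) ?_).symm
      rw [if_pos ((mono_mk f x y).mpr hf)]
  have h3 : ∀ S ∈ E.powerset, ∀ f : V → Fin q,
      (∏ e ∈ S, (if Mono f e then (1 : ℤ) else 0))
        = if (∀ ⦃a b⦄, (fromEdgeSet (S : Set (Sym2 V))).Adj a b → f a = f b)
          then (1 : ℤ) else 0 := by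
    intro S _ f
    have hiff : (∀ e ∈ S, Mono f e)
        ↔ (∀ ⦃a b⦄, (fromEdgeSet (S : Set (Sym2 V))).Adj a b → f a = f b) := by
      constructor
      · intro h a b hab
        obtain ⟨h1', _⟩ := (fromEdgeSet_adj _).mp hab
        exact h _ h1' a b rfl
      · intro h e he
        intro a b heq
        subst heq
        by_cases hab : a = b
        · rw [hab]
        · exact h ((fromEdgeSet_adj _).mpr ⟨he, hab⟩)
    by_cases h : ∀ e ∈ S, Mono f e
    · rw [if_pos (hiff.mp h)]
      exact Finset.prod_eq_one (fun e he => if_pos (h e he))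
    · rw [if_neg (fun hq => h (hiff.mpr hq))]
      push_neg at h
      obtain ⟨e, he, hne⟩ := h
      exact Finset.prod_eq_zero he (if_neg hne)
  have h4 : ∀ S ∈ E.powerset,
      (∑ f : V → Fin q, if (∀ ⦃a b⦄, (fromEdgeSet (S : Set (Sym2 V))).Adj a b → f a = f b)
          then (1 : ℤ) else 0) = (q : ℤ) ^ cc S := by
    intro S _
    rw [Finset.sum_boole]
    have : (Finset.filter (fun f : V → Fin q =>
        ∀ ⦃a b⦄, (fromEdgeSet (S : Set (Sym2 V))).Adj a b → f a = f b) Finset.univ).card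
        = q ^ cc S := by
      rw [← Fintype.card_subtype, ← Nat.card_eq_fintype_card]
      exact card_mono_functions q S
    rw [this]
    push_cast
    ring
  calc (properColorings G q : ℤ)
      = ∑ f : V → Fin q, ∏ e ∈ E, ((-(if Mono f e then (1 : ℤ) else 0)) + 1) := by
        rw [h1]; exact Finset.sum_congr rfl (fun f _ => h2 f)
    _ = ∑ f : V → Fin q, ∑ S ∈ E.powerset,
          (∏ e ∈ S, (-(if Mono f e then (1 : ℤ) else 0))) * ∏ e ∈ E \ S, 1 := by
        refine Finset.sum_congr rfl (fun f _ => ?_)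
        exact Finset.prod_add _ _ _
    _ = ∑ S ∈ E.powerset, ∑ f : V → Fin q,
          (-1 : ℤ) ^ S.card * ∏ e ∈ S, (if Mono f e then (1 : ℤ) else 0) := by
        rw [Finset.sum_comm]
        refine Finset.sum_congr rfl (fun S _ => Finset.sum_congr rfl (fun f _ => ?_))
        rw [Finset.prod_const_one, mul_one]
        rw [show (fun e => (-(if Mono f e then (1 : ℤ) else 0)))
          = fun e => (-1 : ℤ) * (if Mono f e then (1 : ℤ) else 0) from funext (fun e => by ring)]
        rw [Finset.prod_mul_distrib, Finset.prod_const]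
    _ = ∑ S ∈ E.powerset, (-1 : ℤ) ^ S.card * (q : ℤ) ^ cc S := by
        refine Finset.sum_congr rfl (fun S hS => ?_)
        rw [← Finset.mul_sum]
        congr 1
        rw [Finset.sum_congr rfl (fun f _ => h3 S hS f)]
        exact h4 S hS

private lemma poly_eq [Fintype V] (G : SimpleGraph V) (E : Finset (Sym2 V))
    (hE : (E : Set (Sym2 V)) = G.edgeSet) (P : Polynomial ℤ)
    (hP : ∀ q : ℕ, P.eval (q : ℤ) = properColorings G q) :
    P = ∑ S ∈ E.powerset, Polynomial.C ((-1 : ℤ) ^ S.card) * Polynomial.X ^ (cc S) := by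
  apply Polynomial.eq_of_infinite_eval_eq
  have hsub : Set.range (fun n : ℕ => (n : ℤ)) ⊆
      {x | P.eval x = Polynomial.eval x
        (∑ S ∈ E.powerset, Polynomial.C ((-1 : ℤ) ^ S.card) * Polynomial.X ^ (cc S))} := by
    rintro _ ⟨q, rfl⟩
    simp only [Set.mem_setOf_eq, Polynomial.eval_finset_sum, Polynomial.eval_mul,
      Polynomial.eval_C, Polynomial.eval_pow, Polynomial.eval_X]
    rw [hP q, incl_excl G E hE q]
  have hinf : (Set.range (fun n : ℕ => (n : ℤ))).Infinite :=
    Set.infinite_range_of_injective (fun a b h => by exact_mod_cast h)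
  exact hinf.mono hsub

private lemma e_formula [Fintype V] (G : SimpleGraph V) (g : ℕ) (hG : (g : ℕ∞) ≤ G.egirth)
    (E : Finset (Sym2 V)) (hE : (E : Set (Sym2 V)) = G.edgeSet)
    (P : Polynomial ℤ) (hP : ∀ q : ℕ, P.eval (q : ℤ) = properColorings G q)
    (i : ℕ) (hi : i ≤ g - 2) :
    (if i ≤ Fintype.card V then (-1 : ℤ) ^ i * P.coeff (Fintype.card V - i) else 0)
      = ((E.card).choose i : ℤ) := by
  classical
  have hEsub : (E : Set (Sym2 V)) ⊆ G.edgeSet := hE ▸ subset_rfl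
  by_cases hin : i ≤ Fintype.card V
  · rw [if_pos hin, poly_eq G E hE P hP, Polynomial.finset_sum_coeff]
    have hterm : ∀ S ∈ E.powerset,
        (Polynomial.C ((-1 : ℤ) ^ S.card) * Polynomial.X ^ cc S).coeff (Fintype.card V - i)
          = if S.card = i then (-1 : ℤ) ^ i else 0 := by
      intro S hS
      have hSsub : (S : Set (Sym2 V)) ⊆ G.edgeSet :=
        (Finset.coe_subset.mpr (Finset.mem_powerset.mp hS)).trans hEsub
      have hiff := cc_eq_iff hG hSsub hi hin
      rw [Polynomial.coeff_C_mul, Polynomial.coeff_X_pow]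
      by_cases hc : S.card = i
      · rw [if_pos (hiff.mpr hc).symm, hc, mul_one, if_pos rfl]
      · rw [if_neg (fun h => hc (hiff.mp h.symm)), mul_zero, if_neg hc]
    rw [Finset.sum_congr rfl hterm, ← Finset.sum_filter]
    have hfil : E.powerset.filter (fun S => S.card = i) = E.powersetCard i := by
      ext S
      simp [Finset.mem_powersetCard, Finset.mem_powerset, Finset.mem_filter, and_comm]
    rw [hfil, Finset.sum_const, Finset.card_powersetCard, nsmul_eq_mul]
    rw [mul_comm ((E.card.choose i : ℤ)) _, ← mul_assoc, ← pow_add, ← two_mul, pow_mul]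
    norm_num
  · rw [if_neg hin]
    have hac : G.IsAcyclic := by
      intro v p hp
      have h1 : (g : ℕ∞) ≤ p.length := SimpleGraph.le_egirth.mp hG v p hp
      have h1' : g ≤ p.length := by exact_mod_cast h1
      have hnd : p.support.tail.Nodup := hp.support_nodup
      have h2 : p.support.tail.length ≤ Fintype.card V := hnd.length_le_card
      rw [List.length_tail, SimpleGraph.Walk.length_support] at h2
      omega
    have hd : ∀ e ∈ E, ¬ e.IsDiag := fun e he =>
      G.not_isDiag_of_mem_edgeSet (hEsub he)
    have hac' : (fromEdgeSet (E : Set (Sym2 V))).IsAcyclic := by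
      rw [hE, fromEdgeSet_edgeSet]; exact hac
    have hfc := forest_card E hd hac'
    have hlt : E.card < i := by omega
    rw [Nat.choose_eq_zero_of_lt hlt]
    simp

end ChromaticAux

/-- If two finite simple graphs both have girth at least `g` and the same number of edges,
then their chromatic coefficients `e_i` agree for `i = 0, 1, …, g-2`. -/
theorem chromatic_coefficients_eq_of_girth {V W : Type*} [Fintype V] [Fintype W]
    (G : SimpleGraph V) (H : SimpleGraph W) (g : ℕ)
    (hG : (g : ℕ∞) ≤ G.egirth) (hH : (g : ℕ∞) ≤ H.egirth)
    (hE : Nat.card G.edgeSet = Nat.card H.edgeSet)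
    (P Q : Polynomial ℤ)
    (hP : ∀ q : ℕ, P.eval (q : ℤ) = properColorings G q)
    (hQ : ∀ q : ℕ, Q.eval (q : ℤ) = properColorings H q)
    (eG eH : ℕ → ℤ)
    (heG : ∀ k, eG k = if k ≤ Fintype.card V then
      (-1 : ℤ) ^ k * P.coeff (Fintype.card V - k) else 0)
    (heH : ∀ k, eH k = if k ≤ Fintype.card W then
      (-1 : ℤ) ^ k * Q.coeff (Fintype.card W - k) else 0)
    (i : ℕ) (hi : i ≤ g - 2) :
    eG i = eH i := by
  classical
  haveI : Fintype G.edgeSet := Fintype.ofFinite _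
  haveI : Fintype H.edgeSet := Fintype.ofFinite _
  have hGE : ((G.edgeSet.toFinset : Finset (Sym2 V)) : Set (Sym2 V)) = G.edgeSet :=
    Set.coe_toFinset _
  have hHE : ((H.edgeSet.toFinset : Finset (Sym2 W)) : Set (Sym2 W)) = H.edgeSet :=
    Set.coe_toFinset _
  have hGc : G.edgeSet.toFinset.card = Nat.card G.edgeSet := by
    rw [Set.toFinset_card, Nat.card_eq_fintype_card]
  have hHc : H.edgeSet.toFinset.card = Nat.card H.edgeSet := by
    rw [Set.toFinset_card, Nat.card_eq_fintype_card]
  rw [heG i, heH i,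
    ChromaticAux.e_formula G g hG G.edgeSet.toFinset hGE P hP i hi,
    ChromaticAux.e_formula H g hH H.edgeSet.toFinset hHE Q hQ i hi,
    hGc, hHc, hE]
end

section
/- Let G be a finite simple graph with girth at least g. Then for i = 0, 1, ..., g-2, the chromatic coefficient satisfies e_i(G) = binomial(|E(G)|, i). -/
open Polynomial

open SimpleGraph Finset

namespace ChromAux

variable {V : Type*} [Fintype V]

/-- number of connected components of the spanning subgraph with edges S -/
noncomputable def cc (S : Finset (Sym2 V)) : ℕ :=
  Nat.card (SimpleGraph.fromEdgeSet (↑S : Set (Sym2 V))).ConnectedComponent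

lemma cc_empty : cc (∅ : Finset (Sym2 V)) = Fintype.card V := by
  classical
  rw [cc, ← Nat.card_eq_fintype_card]
  refine Nat.card_congr ?_
  have : (fromEdgeSet ((↑(∅ : Finset (Sym2 V))) : Set (Sym2 V))) = (⊥ : SimpleGraph V) := by
    simp
  rw [this]
  refine Equiv.symm ⟨fun v => SimpleGraph.connectedComponentMk _ v,
    ConnectedComponent.lift id ?_, fun v => rfl, ?_⟩
  · intro v w p _
    cases p with
    | nil => rfl
    | cons h _ => exact absurd h (by simp)
  · refine ConnectedComponent.ind fun v => rfl

omit [Fintype V] in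
lemma cc_congr {S T : Finset (Sym2 V)}
    (h : ∀ a b : V, (fromEdgeSet (↑S : Set (Sym2 V))).Reachable a b ↔
      (fromEdgeSet (↑T : Set (Sym2 V))).Reachable a b) : cc S = cc T := by
  refine Nat.card_congr ?_
  exact Quot.congrRight h

end ChromAux

namespace ChromAux2
open ChromAux

variable {V : Type*} [Fintype V] [DecidableEq V]

omit [Fintype V] in
/-- Reachability in `insert s(u,v) T` decomposes. -/
lemma reach_decomp {T : Finset (Sym2 V)} {u v : V} :
    ∀ {a b : V} (_ : (fromEdgeSet (↑(insert s(u,v) T) : Set (Sym2 V))).Walk a b),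
    (fromEdgeSet (↑T : Set (Sym2 V))).Reachable a b ∨
    ((fromEdgeSet (↑T : Set (Sym2 V))).Reachable a u ∧
     (fromEdgeSet (↑T : Set (Sym2 V))).Reachable v b) ∨
    ((fromEdgeSet (↑T : Set (Sym2 V))).Reachable a v ∧
     (fromEdgeSet (↑T : Set (Sym2 V))).Reachable u b) := by
  classical
  set R := (fromEdgeSet (↑T : Set (Sym2 V))).Reachable with hR
  intro a b w
  induction w with
  | nil => exact Or.inl (Reachable.refl _)
  | @cons a x b hadj p ih =>
    rw [fromEdgeSet_adj] at hadj -- keep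
    obtain ⟨hmem, hne⟩ := hadj
    rw [Finset.coe_insert, Set.mem_insert_iff] at hmem
    rcases hmem with heq | hmem
    · -- the special edge
      rcases Sym2.eq_iff.mp heq with ⟨rfl, rfl⟩ | ⟨rfl, rfl⟩
      · -- a = u, x = v
        rcases ih with h | ⟨h1, h2⟩ | ⟨h1, h2⟩
        · exact Or.inr (Or.inl ⟨Reachable.refl _, h⟩)
        · -- R v u and R v b : then R a u via refl? a = u. left? R a b = R u b: u? 
          exact Or.inr (Or.inl ⟨Reachable.refl _, h2⟩)
        · -- R v v, R u b
          exact Or.inl h2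
      · -- a = v, x = u
        rcases ih with h | ⟨h1, h2⟩ | ⟨h1, h2⟩
        · exact Or.inr (Or.inr ⟨Reachable.refl _, h⟩)
        · exact Or.inl h2
        · exact Or.inr (Or.inr ⟨Reachable.refl _, h2⟩)
    · -- ordinary edge of T
      have hax : R a x := Adj.reachable ((fromEdgeSet_adj _).mpr ⟨hmem, hne⟩)
      rcases ih with h | ⟨h1, h2⟩ | ⟨h1, h2⟩
      · exact Or.inl (hax.trans h)
      · exact Or.inr (Or.inl ⟨hax.trans h1, h2⟩)
      · exact Or.inr (Or.inr ⟨hax.trans h1, h2⟩)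

/-- Adding a bridge decreases the number of components by exactly one. -/
lemma cc_insert_bridge {T : Finset (Sym2 V)} {u v : V} (hne : u ≠ v)
    (hnr : ¬ (fromEdgeSet (↑T : Set (Sym2 V))).Reachable u v) :
    cc (insert s(u,v) T) + 1 = cc T := by
  classical
  set GT := fromEdgeSet (↑T : Set (Sym2 V))
  set GS := fromEdgeSet (↑(insert s(u,v) T) : Set (Sym2 V))
  have hle : GT ≤ GS := fromEdgeSet_mono (by simp [Finset.coe_insert, Set.subset_insert])
  set φ : GT.ConnectedComponent → GS.ConnectedComponent :=
    ConnectedComponent.map (SimpleGraph.Hom.ofLE hle) with hφ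
  have hφmk : ∀ x : V, φ (GT.connectedComponentMk x) = GS.connectedComponentMk x := fun x => rfl
  set cv := GT.connectedComponentMk v with hcv
  -- the restricted map
  have hbij : Function.Bijective (fun x : {x : GT.ConnectedComponent // x ≠ cv} => φ x.1) := by
    constructor
    · rintro ⟨x, hx⟩ ⟨y, hy⟩ hxy
      obtain ⟨a, rfl⟩ := Quot.exists_rep x
      obtain ⟨b, rfl⟩ := Quot.exists_rep y
      refine Subtype.ext ?_
      have hxy' : GS.connectedComponentMk a = GS.connectedComponentMk b := hxy
      have hreach : GS.Reachable a b := ConnectedComponent.eq.mp hxy'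
      obtain ⟨w⟩ := hreach
      rcases reach_decomp w with h | ⟨h1, h2⟩ | ⟨h1, h2⟩
      · exact ConnectedComponent.sound h
      · exact absurd (ConnectedComponent.sound h2.symm) hy
      · exact absurd (ConnectedComponent.sound h1) hx
    
    · intro z
      refine z.ind fun b => ?_
      by_cases hb : GT.connectedComponentMk b = cv
      · refine ⟨⟨GT.connectedComponentMk u, fun h => hnr (ConnectedComponent.eq.mp h)⟩, ?_⟩
        have huv : GS.Reachable u v :=
          Adj.reachable ((fromEdgeSet_adj _).mpr ⟨by simp, hne⟩)
        have hvb : GT.Reachable v b := ConnectedComponent.eq.mp hb.symm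
        exact ConnectedComponent.sound (huv.trans (hvb.mono hle))
      · exact ⟨⟨GT.connectedComponentMk b, hb⟩, rfl⟩
  have h1 : cc (insert s(u,v) T) = Nat.card {x : GT.ConnectedComponent // x ≠ cv} :=
    (Nat.card_eq_of_bijective _ hbij).symm
  have h2 : cc T = Nat.card {x : GT.ConnectedComponent // x = cv}
      + Nat.card {x : GT.ConnectedComponent // x ≠ cv} := by
    rw [cc, ← Nat.card_sum]
    exact Nat.card_congr (Equiv.sumCompl (· = cv)).symm
  have h3 : Nat.card {x : GT.ConnectedComponent // x = cv} = 1 := by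
    haveI : Unique {x : GT.ConnectedComponent // x = cv} :=
      ⟨⟨⟨cv, rfl⟩⟩, by rintro ⟨x, rfl⟩; rfl⟩
    exact Nat.card_unique
  omega

end ChromAux2

namespace ChromAux3
open ChromAux ChromAux2

variable {V : Type*} [Fintype V] [DecidableEq V]

/-- spanning forest with same components -/
lemma forest (S : Finset (Sym2 V)) (hS : ∀ e ∈ S, ¬ e.IsDiag) :
    ∃ S' ⊆ S, cc S' = cc S ∧ cc S' + S'.card = Fintype.card V := by
  classical
  induction S using Finset.strongInduction with
  | _ S ih =>
    rcases Finset.eq_empty_or_nonempty S with rfl | ⟨e, he⟩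
    · exact ⟨∅, Finset.Subset.refl _, rfl, by simp [cc_empty]⟩
    · obtain ⟨⟨u, v⟩, rfl⟩ := Quot.exists_rep e
      have hne : u ≠ v := by
        intro h
        exact hS _ he (by simp [h])
      set T := S.erase s(u,v) with hT
      have hins : S = insert s(u,v) T := (Finset.insert_erase he).symm
      have hTS : T ⊂ S := Finset.erase_ssubset he
      have hSdiag : ∀ e ∈ T, ¬ e.IsDiag := fun e heT => hS e (Finset.mem_of_mem_erase heT)
      obtain ⟨S'', hsub, hc1, hc2⟩ := ih T hTS hSdiag
      by_cases hr : (fromEdgeSet (↑T : Set (Sym2 V))).Reachable u v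
      · have hcc : cc S = cc T := by
          refine cc_congr fun a b => ⟨fun h => ?_, fun h => h.mono (fromEdgeSet_mono ?_)⟩
          · obtain ⟨w⟩ := h
            rw [hins] at w
            rcases reach_decomp w with h | ⟨h1, h2⟩ | ⟨h1, h2⟩
            · exact h
            · exact (h1.trans hr).trans h2
            · exact (h1.trans hr.symm).trans h2
          · rw [hins]
            simp [Finset.coe_insert, Set.subset_insert]
        exact ⟨S'', hsub.trans (Finset.erase_subset _ _), by rw [hc1, hcc], hc2⟩
      · have hbr : cc S + 1 = cc T := by
          rw [hins]; exact cc_insert_bridge hne hr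
        have hnr'' : ¬ (fromEdgeSet (↑S'' : Set (Sym2 V))).Reachable u v :=
          fun h => hr (h.mono (fromEdgeSet_mono (by exact_mod_cast hsub)))
        have hbr'' : cc (insert s(u,v) S'') + 1 = cc S'' := cc_insert_bridge hne hnr''
        have hnm : s(u,v) ∉ S'' := fun h => (Finset.notMem_erase _ _) (hsub h)
        refine ⟨insert s(u,v) S'', ?_, ?_, ?_⟩
        · rw [hins]
          exact Finset.insert_subset_insert _ hsub
        · omega
        · rw [Finset.card_insert_of_notMem hnm]
          omega

/-- same cc count on a subset implies same reachability -/
lemma reach_of_cc_eq {S' S : Finset (Sym2 V)} (hsub : S' ⊆ S) (hcc : cc S' = cc S)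
    {a b : V} (h : (fromEdgeSet (↑S : Set (Sym2 V))).Reachable a b) :
    (fromEdgeSet (↑S' : Set (Sym2 V))).Reachable a b := by
  classical
  set GT := fromEdgeSet (↑S' : Set (Sym2 V))
  set GS := fromEdgeSet (↑S : Set (Sym2 V))
  have hle : GT ≤ GS := fromEdgeSet_mono (by exact_mod_cast hsub)
  set φ : GT.ConnectedComponent → GS.ConnectedComponent :=
    ConnectedComponent.map (SimpleGraph.Hom.ofLE hle) with hφ
  have hsurj : Function.Surjective φ := by
    intro z
    obtain ⟨x, rfl⟩ := Quot.exists_rep z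
    exact ⟨GT.connectedComponentMk x, rfl⟩
  have hcard : Nat.card GT.ConnectedComponent = Nat.card GS.ConnectedComponent := hcc
  have hinj : Function.Injective φ :=
    ((Nat.bijective_iff_surjective_and_card φ).mpr ⟨hsurj, hcard⟩).injective
  have h1 : GS.connectedComponentMk a = GS.connectedComponentMk b :=
    ConnectedComponent.sound h
  have h2 : GT.connectedComponentMk a = GT.connectedComponentMk b := hinj h1
  exact ConnectedComponent.eq.mp h2

end ChromAux3

namespace ChromAux4
open ChromAux ChromAux2 ChromAux3

variable {V : Type*} [Fintype V] [DecidableEq V]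

lemma exists_short_cycle {G : SimpleGraph V} {S' : Finset (Sym2 V)} {u v : V}
    (hadj : G.Adj u v) (hE : (↑S' : Set (Sym2 V)) ⊆ G.edgeSet) (hnm : s(u,v) ∉ S')
    (hr : (fromEdgeSet (↑S' : Set (Sym2 V))).Reachable v u) :
    ∃ ℓ : ℕ, 3 ≤ ℓ ∧ G.egirth ≤ (ℓ : ℕ∞) ∧ ℓ ≤ S'.card + 1 := by
  classical
  obtain ⟨w⟩ := hr
  set p := w.toPath with hp
  have hedges : ∀ e ∈ p.1.edges, e ∈ G.edgeSet := by
    intro e hepe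
    have h1 : e ∈ (fromEdgeSet (↑S' : Set (Sym2 V))).edgeSet := p.1.edges_subset_edgeSet hepe
    rw [edgeSet_fromEdgeSet] at h1
    exact hE h1.1
  have hedgesS' : ∀ e ∈ p.1.edges, e ∈ S' := by
    intro e hepe
    have h1 : e ∈ (fromEdgeSet (↑S' : Set (Sym2 V))).edgeSet := p.1.edges_subset_edgeSet hepe
    rw [edgeSet_fromEdgeSet] at h1
    exact h1.1
  set q := p.1.transfer G hedges with hq
  have hqpath : q.IsPath := p.2.transfer hedges
  have hqe : q.edges = p.1.edges := p.1.edges_transfer hedges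
  have hcyc : (SimpleGraph.Walk.cons hadj q).IsCycle := by
    rw [SimpleGraph.Walk.cons_isCycle_iff]
    exact ⟨hqpath, fun h => hnm (hedgesS' _ (hqe ▸ h))⟩
  refine ⟨(SimpleGraph.Walk.cons hadj q).length, hcyc.three_le_length, ?_, ?_⟩
  · rw [SimpleGraph.egirth]
    exact iInf_le_of_le u (iInf_le_of_le _ (iInf_le _ hcyc))
  · have hlen : q.length = p.1.edges.length := by
      rw [hq]
      rw [SimpleGraph.Walk.length_transfer]
      exact (SimpleGraph.Walk.length_edges _).symm
    have hnodup : p.1.edges.Nodup := p.2.edges_nodup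
    have : p.1.edges.length ≤ S'.card := by
      rw [← List.toFinset_card_of_nodup hnodup]
      exact Finset.card_le_card fun x hx => hedgesS' x (List.mem_toFinset.mp hx)
    simp only [SimpleGraph.Walk.length_cons]
    omega

end ChromAux4

namespace ChromAux5
open ChromAux ChromAux2 ChromAux3 ChromAux4

variable {V : Type*} [Fintype V] [DecidableEq V]

def monoOn {q : ℕ} (f : V → Fin q) (e : Sym2 V) : Prop :=
  ∀ x y : V, e = s(x,y) → f x = f y

omit [Fintype V] [DecidableEq V] in
lemma mono_iff {q : ℕ} (f : V → Fin q) (S : Finset (Sym2 V)) :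
    (∀ x y, (fromEdgeSet (↑S : Set (Sym2 V))).Adj x y → f x = f y) ↔
      ∀ e ∈ S, monoOn f e := by
  constructor
  · intro h e he x y heq
    by_cases hxy : x = y
    · rw [hxy]
    · exact h x y ((fromEdgeSet_adj _).mpr ⟨heq ▸ he, hxy⟩)
  · intro h x y hadj
    rw [fromEdgeSet_adj] at hadj
    exact h _ hadj.1 x y rfl

lemma card_mono (q : ℕ) (S : Finset (Sym2 V)) :
    Nat.card {f : V → Fin q // ∀ x y, (fromEdgeSet (↑S : Set (Sym2 V))).Adj x y → f x = f y}
      = q ^ cc S := by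
  classical
  set GS := fromEdgeSet (↑S : Set (Sym2 V))
  have he : {f : V → Fin q // ∀ x y, GS.Adj x y → f x = f y} ≃
      (GS.ConnectedComponent → Fin q) := by
    refine ⟨fun fh => ConnectedComponent.lift fh.1 ?_, fun g =>
      ⟨fun v => g (GS.connectedComponentMk v),
        fun x y h => congrArg g (ConnectedComponent.sound h.reachable)⟩, ?_, ?_⟩
    · intro a b p hp
      clear hp
      induction p with
      | nil => rfl
      | cons h p ih => exact (fh.2 _ _ h).trans ih
    · rintro ⟨f, hf⟩
      rfl
    · intro g
      funext c
      exact c.ind fun v => rfl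
  rw [Nat.card_congr he]
  haveI : Finite GS.ConnectedComponent := Quot.finite _
  rw [Nat.card_fun]
  simp [cc]
  exact congrArg _ (Fintype.card_congr' rfl)

lemma IE (G : SimpleGraph V) [DecidableRel G.Adj] (q : ℕ) :
    ∑ S ∈ G.edgeFinset.powerset, (-1:ℤ)^S.card * (q:ℤ) ^ cc S
      = (Nat.card {f : V → Fin q // ∀ ⦃x y⦄, G.Adj x y → f x ≠ f y} : ℤ) := by
  classical
  -- rewrite each power as a cardinality
  have hN : ∀ S : Finset (Sym2 V), ((q:ℤ) ^ cc S) =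
      ((Finset.univ.filter (fun f : V → Fin q => ∀ e ∈ S, monoOn f e)).card : ℤ) := by
    intro S
    rw [← Nat.cast_pow]
    congr 1
    rw [← card_mono q S]
    rw [Nat.card_eq_fintype_card, Fintype.card_subtype]
    congr 1
    apply Finset.filter_congr
    intro f _
    exact mono_iff f S
  calc ∑ S ∈ G.edgeFinset.powerset, (-1:ℤ)^S.card * (q:ℤ) ^ cc S
      = ∑ S ∈ G.edgeFinset.powerset, ∑ f : V → Fin q,
          (-1:ℤ)^S.card * (if ∀ e ∈ S, monoOn f e then 1 else 0) := by
        refine Finset.sum_congr rfl fun S _ => ?_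
        rw [hN, Finset.card_filter]
        push_cast
        rw [Finset.mul_sum]
    _ = ∑ f : V → Fin q, ∑ S ∈ G.edgeFinset.powerset,
          (-1:ℤ)^S.card * (if ∀ e ∈ S, monoOn f e then 1 else 0) := Finset.sum_comm
    _ = ∑ f : V → Fin q,
          (if G.edgeFinset.filter (monoOn f) = ∅ then 1 else 0) := by
        refine Finset.sum_congr rfl fun f _ => ?_
        have h1 : ∀ S ∈ G.edgeFinset.powerset,
            (-1:ℤ)^S.card * (if ∀ e ∈ S, monoOn f e then 1 else 0)
            = if S ⊆ G.edgeFinset.filter (monoOn f) then (-1:ℤ)^S.card else 0 := by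
          intro S hS
          have : (∀ e ∈ S, monoOn f e) ↔ S ⊆ G.edgeFinset.filter (monoOn f) := by
            rw [Finset.mem_powerset] at hS
            constructor
            · intro h e he
              exact Finset.mem_filter.mpr ⟨hS he, h e he⟩
            · intro h e he
              exact (Finset.mem_filter.mp (h he)).2
          simp only [this]
          split <;> simp
        rw [Finset.sum_congr rfl h1, Finset.sum_ite, Finset.sum_const_zero, add_zero]
        have h2 : G.edgeFinset.powerset.filter (· ⊆ G.edgeFinset.filter (monoOn f))
            = (G.edgeFinset.filter (monoOn f)).powerset := by
          ext s
          simp only [Finset.mem_filter, Finset.mem_powerset]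
          exact ⟨fun h => h.2, fun h => ⟨h.trans (Finset.filter_subset _ _), h⟩⟩
        rw [h2, Finset.sum_powerset_neg_one_pow_card]
    _ = ((Finset.univ.filter (fun f : V → Fin q =>
          ∀ ⦃x y⦄, G.Adj x y → f x ≠ f y)).card : ℤ) := by
        rw [Finset.card_filter]
        push_cast
        refine Finset.sum_congr rfl fun f _ => ?_
        congr 1
        simp only [eq_iff_iff, Finset.filter_eq_empty_iff]
        constructor
        · intro h x y hadj hfeq
          have hmem : s(x,y) ∈ G.edgeFinset := by
            rw [SimpleGraph.mem_edgeFinset]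
            exact hadj
          refine h hmem ?_
          intro a b heq
          rcases Sym2.eq_iff.mp heq with ⟨rfl, rfl⟩ | ⟨rfl, rfl⟩
          · exact hfeq
          · exact hfeq.symm
        · intro h e he hmono
          obtain ⟨⟨x, y⟩, rfl⟩ := Quot.exists_rep e
          rw [SimpleGraph.mem_edgeFinset] at he
          exact h he (hmono x y rfl)
    _ = (Nat.card {f : V → Fin q // ∀ ⦃x y⦄, G.Adj x y → f x ≠ f y} : ℤ) := by
        rw [Nat.card_eq_fintype_card, Fintype.card_subtype]

end ChromAux5


open ChromAux ChromAux2 ChromAux3 ChromAux4 ChromAux5 in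
/-- If `G` has girth at least `g`, then `e_i(G) = C(|E(G)|, i)` for `i = 0, 1, …, g-2`. -/
theorem chromatic_coefficients_of_girth {V : Type*} [Fintype V]
    (G : SimpleGraph V) (g : ℕ) (hG : (g : ℕ∞) ≤ G.egirth)
    (P : Polynomial ℤ)
    (hP : ∀ q : ℕ, P.eval (q : ℤ) = properColorings G q)
    (e : ℕ → ℤ)
    (he : ∀ k, e k = if k ≤ Fintype.card V then
      (-1 : ℤ) ^ k * P.coeff (Fintype.card V - k) else 0)
    (i : ℕ) (hi : i ≤ g - 2) :
    e i = Nat.choose (Nat.card G.edgeSet) i := by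
  classical
  letI : DecidableEq V := Classical.decEq V
  letI : DecidableRel G.Adj := fun a b => Classical.dec _
  set n := Fintype.card V with hn
  set E := G.edgeFinset with hE
  have hEcard : Nat.card G.edgeSet = E.card := by
    rw [Nat.card_eq_fintype_card, hE, SimpleGraph.edgeFinset_card]
  have hdiagE : ∀ e' ∈ E, ¬ e'.IsDiag := by
    intro e' he'
    rw [hE, SimpleGraph.mem_edgeFinset] at he'
    exact G.not_isDiag_of_mem_edgeSet he'
  -- the subgraph-expansion polynomial
  set Q : Polynomial ℤ :=
    ∑ S ∈ E.powerset, Polynomial.C ((-1:ℤ)^S.card) * Polynomial.X ^ cc S with hQ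
  have hQeval : ∀ q : ℕ, Q.eval (q:ℤ) = ∑ S ∈ E.powerset, (-1:ℤ)^S.card * (q:ℤ) ^ cc S := by
    intro q
    rw [hQ, Polynomial.eval_finset_sum]
    refine Finset.sum_congr rfl fun S _ => ?_
    simp
  have hPQ : P = Q := by
    have hroot : ∀ q : ℕ, (P - Q).IsRoot (q : ℤ) := by
      intro q
      have h1 : Q.eval (q:ℤ) = (properColorings G q : ℤ) := by
        rw [hQeval, hE, ChromAux5.IE G q]
        rfl
      simp [Polynomial.IsRoot, Polynomial.eval_sub, hP q, h1]
    have hinf : {x : ℤ | (P - Q).IsRoot x}.Infinite := by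
      refine Set.Infinite.mono ?_ (Set.infinite_range_of_injective (Nat.cast_injective (R := ℤ)))
      rintro x ⟨q, rfl⟩
      exact hroot q
    have := Polynomial.eq_zero_of_infinite_isRoot _ hinf
    linear_combination (norm := ring_nf) this
  -- the cycle-based dichotomy
  have hcycle : ∀ S' S : Finset (Sym2 V), S' ⊆ S → S ⊆ E → S' ≠ S → cc S' = cc S →
      ∃ ℓ : ℕ, 3 ≤ ℓ ∧ g ≤ ℓ ∧ ℓ ≤ S'.card + 1 := by
    intro S' S hsub hSE hne hcc
    obtain ⟨e', heS, heS'⟩ := Finset.exists_of_ssubset (ssubset_of_subset_of_ne hsub hne)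
    obtain ⟨⟨u, v⟩, rfl⟩ := Quot.exists_rep e'
    have heS2 : s(u,v) ∈ S := heS
    have heS'2 : s(u,v) ∉ S' := heS'
    have hadj : G.Adj u v := by
      have := hSE heS2
      rw [hE, SimpleGraph.mem_edgeFinset] at this
      exact this
    have hreachS : (fromEdgeSet (↑S : Set (Sym2 V))).Reachable v u := by
      refine SimpleGraph.Adj.reachable ?_
      rw [fromEdgeSet_adj]
      refine ⟨?_, hadj.ne.symm⟩
      rw [Sym2.eq_swap]
      exact heS2
    have hreach : (fromEdgeSet (↑S' : Set (Sym2 V))).Reachable v u :=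
      ChromAux3.reach_of_cc_eq hsub hcc hreachS
    have hEsub : (↑S' : Set (Sym2 V)) ⊆ G.edgeSet := by
      intro x hx
      have : x ∈ E := hSE (hsub hx)
      rwa [hE, SimpleGraph.mem_edgeFinset] at this
    obtain ⟨ℓ, h3, hgirth, hlen⟩ :=
      ChromAux4.exists_short_cycle hadj hEsub heS'2 hreach
    refine ⟨ℓ, h3, ?_, hlen⟩
    have : (g : ℕ∞) ≤ (ℓ : ℕ∞) := le_trans hG hgirth
    exact_mod_cast this
  by_cases hin : i ≤ n
  · -- main case
    have key : ∀ S : Finset (Sym2 V), S ⊆ E → (S.card = i ↔ cc S = n - i) := by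
      intro S hSE
      have hdiag : ∀ e' ∈ S, ¬ e'.IsDiag := fun e' h => hdiagE e' (hSE h)
      obtain ⟨S', hsub, hcc, hsum⟩ := ChromAux3.forest S hdiag
      by_cases hSS : S' = S
      · subst hSS
        constructor <;> intro h <;> omega
      · obtain ⟨ℓ, h3, hgl, hlen⟩ := hcycle S' S hsub hSE hSS hcc
        have hlt : S'.card < S.card :=
          Finset.card_lt_card (ssubset_of_subset_of_ne hsub hSS)
        constructor <;> intro h <;> exfalso <;> omega
    have hfilter : E.powerset.filter (fun S => n - i = cc S) = Finset.powersetCard i E := by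
      ext S
      simp only [Finset.mem_filter, Finset.mem_powerset, Finset.mem_powersetCard]
      constructor
      · rintro ⟨h1, h2⟩
        exact ⟨h1, (key S h1).mpr h2.symm⟩
      · rintro ⟨h1, h2⟩
        exact ⟨h1, ((key S h1).mp h2).symm⟩
    have hcoeff : P.coeff (n - i) = ((E.card.choose i : ℤ)) * (-1:ℤ)^i := by
      rw [hPQ, hQ, Polynomial.finset_sum_coeff]
      have : ∀ S ∈ E.powerset,
          (Polynomial.C ((-1:ℤ)^S.card) * Polynomial.X ^ cc S).coeff (n - i)
          = if n - i = cc S then (-1:ℤ)^S.card else 0 := by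
        intro S _
        rw [Polynomial.coeff_C_mul, Polynomial.coeff_X_pow]
        split <;> simp
      rw [Finset.sum_congr rfl this, Finset.sum_ite, Finset.sum_const_zero, add_zero, hfilter]
      have : ∀ S ∈ Finset.powersetCard i E, ((-1:ℤ))^S.card = (-1:ℤ)^i := by
        intro S hS
        rw [(Finset.mem_powersetCard.mp hS).2]
      rw [Finset.sum_congr rfl this, Finset.sum_const, Finset.card_powersetCard]
      simp [mul_comm]
    rw [he i, if_pos hin, hcoeff, hEcard]
    ring_nf
    simp [mul_pow]
  · -- degenerate case : i > n, both sides are zero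
    rw [he i, if_neg hin]
    have hm : E.card < i := by
      obtain ⟨S', hsub, hcc, hsum⟩ := ChromAux3.forest E hdiagE
      by_cases hSS : S' = E
      · subst hSS
        omega
      · obtain ⟨ℓ, h3, hgl, hlen⟩ := hcycle S' E hsub (Finset.Subset.refl _) hSS hcc
        rcases isEmpty_or_nonempty V with hV | hV
        · have : n = 0 := by simp [hn, Fintype.card_eq_zero]
          omega
        · have hpos : 0 < cc S' := by
            have : Nonempty ((fromEdgeSet (↑S' : Set (Sym2 V))).ConnectedComponent) :=
              ⟨SimpleGraph.connectedComponentMk _ (Classical.arbitrary V)⟩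
            haveI : Finite ((fromEdgeSet (↑S' : Set (Sym2 V))).ConnectedComponent) :=
              Quot.finite _
            exact Nat.card_pos
          omega
    rw [hEcard, Nat.choose_eq_zero_of_lt hm]
    simp
end
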